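/- arXiv:2203.11929 — 4 statements merged into one kernel-verified Lean document; each statement's English description precedes it below -/
import Mathlib

section
/- Let (F,Ω,⋆) be a stratified fusion system on a group S and let 1 denote the trivial subgroup of S. Then 1⋆ is normal in F; in particular, 1⋆ ≤ Soc(F). -/
/-- `F f X Y` asserts that the function `f : S → S` (through its restriction to `X`)
is an `F`-homomorphism from the subgroup `X` to the subgroup `Y`. -/
abbrev HomPred (S : Type*) [Group S] := (S → S) → Subgroup S → Subgroup S → Prop

/-- A fusion system, with hom-sets given by `F · X Y`, on the subgroup `T`
of the ambient group `S`.  Morphisms are represented by functions `S → S`,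
two functions agreeing on `X` representing the same morphism `X → Y`. -/
structure IsFusionSystem {S : Type*} [Group S] (T : Subgroup S) (F : HomPred S) : Prop where
  le_base : ∀ f X Y, F f X Y → X ≤ T ∧ Y ≤ T
  mapsTo : ∀ f X Y, F f X Y → Set.MapsTo f (X : Set S) (Y : Set S)
  injOn : ∀ f X Y, F f X Y → Set.InjOn f (X : Set S)
  map_mul' : ∀ f X Y, F f X Y → ∀ x ∈ X, ∀ y ∈ X, f (x * y) = f x * f y
  of_eqOn : ∀ f g X Y, F f X Y → Set.EqOn g f (X : Set S) → F g X Y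
  conj_mem : ∀ g ∈ T, ∀ X Y : Subgroup S, X ≤ T → Y ≤ T →
    (∀ x ∈ X, g⁻¹ * x * g ∈ Y) → F (fun x => g⁻¹ * x * g) X Y
  comp_mem : ∀ f g X Y Z, F f X Y → F g Y Z → F (g ∘ f) X Z
  restrict_mem : ∀ f X Y X₀ Y₀, F f X Y → X₀ ≤ X → Y₀ ≤ Y →
    Set.MapsTo f (X₀ : Set S) (Y₀ : Set S) → F f X₀ Y₀
  corestrict_mem : ∀ f X Y, F f X Y → F f X (Subgroup.closure (f '' (X : Set S)))
  inv_mem : ∀ f X Y, F f X Y →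
    ∃ g, F g (Subgroup.closure (f '' (X : Set S))) X ∧ ∀ x ∈ X, g (f x) = x

variable {S : Type*} [Group S]

/-- `f` is an `F`-isomorphism from `X` onto `Y`. -/
def IsFIso (F : HomPred S) (f : S → S) (X Y : Subgroup S) : Prop :=
  F f X Y ∧ f '' (X : Set S) = (Y : Set S)

/-- `X^F`, the set of `F`-conjugates of `X`. -/
def FConj (F : HomPred S) (X : Subgroup S) : Set (Subgroup S) :=
  {Y | ∃ f, IsFIso F f X Y}

/-- `N` is normal in the fusion system `F` on the base subgroup `T`:
`N` is normal in `T` and every `F`-isomorphism `X → Y` extends to an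
`F`-isomorphism `XN → YN` mapping `N` onto `N`. -/
def NormalInF (T : Subgroup S) (F : HomPred S) (N : Subgroup S) : Prop :=
  N ≤ T ∧ (∀ g ∈ T, ∀ n ∈ N, g⁻¹ * n * g ∈ N) ∧
    ∀ f X Y, IsFIso F f X Y →
      ∃ g, IsFIso F g (X ⊔ N) (Y ⊔ N) ∧ Set.EqOn g f (X : Set S) ∧
        g '' (N : Set S) = (N : Set S)

/-- The supremum of the lengths of strictly increasing chains in `Ω`
terminating in `A`. -/
noncomputable def dimEnd (Ω : Set (Subgroup S)) (A : Subgroup S) : ℕ :=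
  sSup {n | ∃ c : Fin (n + 1) → Subgroup S,
    StrictMono c ∧ (∀ i, c i ∈ Ω) ∧ c (Fin.last n) = A}

/-- The supremum of the lengths of strictly increasing chains in `Ω`. -/
noncomputable def dimOmega (Ω : Set (Subgroup S)) : ℕ :=
  sSup {n | ∃ c : Fin (n + 1) → Subgroup S, StrictMono c ∧ ∀ i, c i ∈ Ω}

/-- `(Ω, star)` is a stratification on the fusion system `F` on base `T`. -/
structure IsStratification (T : Subgroup S) (F : HomPred S)
    (Ω : Set (Subgroup S)) (star : Subgroup S → Subgroup S) : Prop where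
  omega_le : ∀ A ∈ Ω, A ≤ T
  star_mem : ∀ X : Subgroup S, X ≤ T → star X ∈ Ω
  star_fix : ∀ A ∈ Ω, star A = A
  star_mono : ∀ X Y : Subgroup S, X ≤ T → Y ≤ T → X ≤ Y → star X ≤ star Y
  finDim : ∃ N : ℕ, ∀ n : ℕ,
    (∃ c : Fin (n + 1) → Subgroup S, StrictMono c ∧ ∀ i, c i ∈ Ω) → n ≤ N
  conj_invariant : ∀ A ∈ Ω, ∀ f Y, IsFIso F f A Y → Y ∈ Ω
  le_star : ∀ X : Subgroup S, X ≤ T → X ≤ star X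
  extend_star : ∀ f X Y, IsFIso F f X Y →
    ∃ g, IsFIso F g (star X) (star Y) ∧ Set.EqOn g f (X : Set S)

/-- `dim_Ω(X)`, the supremum of the lengths of strictly increasing chains
in `Ω` terminating in `X⋆`. -/
noncomputable def dimStar (Ω : Set (Subgroup S)) (star : Subgroup S → Subgroup S)
    (X : Subgroup S) : ℕ :=
  dimEnd Ω (star X)

/-- `V` is fully normalized in the stratified fusion system `(F, Ω, star)` on base `T`. -/
def FullyNormalizedIn (T : Subgroup S) (F : HomPred S) (Ω : Set (Subgroup S))
    (star : Subgroup S → Subgroup S) (V : Subgroup S) : Prop :=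
  ∀ U ∈ FConj F V, dimStar Ω star (Subgroup.normalizer (U : Set S) ⊓ T) ≤ dimStar Ω star (Subgroup.normalizer (V : Set S) ⊓ T)

/-- `V` is fully centralized in the stratified fusion system `(F, Ω, star)` on base `T`. -/
def FullyCentralizedIn (T : Subgroup S) (F : HomPred S) (Ω : Set (Subgroup S))
    (star : Subgroup S → Subgroup S) (V : Subgroup S) : Prop :=
  ∀ U ∈ FConj F V,
    dimStar Ω star ((Subgroup.centralizer (U : Set S) ⊓ T) ⊔ U) ≤
      dimStar Ω star ((Subgroup.centralizer (V : Set S) ⊓ T) ⊔ V)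

/-- `Γ` is an `F`-closed set of subgroups. -/
def FClosed (F : HomPred S) (Γ : Set (Subgroup S)) : Prop :=
  Γ.Nonempty ∧ (∀ X ∈ Γ, ∀ Y ∈ FConj F X, Y ∈ Γ) ∧
    ∀ X ∈ Γ, ∀ Y : Subgroup S, X ≤ Y → Y ∈ Γ

/-- `Y` is normalizer-inductive in the fusion system `F` on base `T`. -/
def NormalizerInductive (T : Subgroup S) (F : HomPred S) (Y : Subgroup S) : Prop :=
  ∀ X ∈ FConj F Y, ∃ φ, F φ (Subgroup.normalizer (X : Set S) ⊓ T) (Subgroup.normalizer (Y : Set S) ⊓ T) ∧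
    φ '' (X : Set S) = (Y : Set S)

/-- `Y` is centralizer-inductive in the fusion system `F` on base `T`. -/
def CentralizerInductive (T : Subgroup S) (F : HomPred S) (Y : Subgroup S) : Prop :=
  ∀ X ∈ FConj F Y, ∃ ψ,
    F ψ ((Subgroup.centralizer (X : Set S) ⊓ T) ⊔ X)
        ((Subgroup.centralizer (Y : Set S) ⊓ T) ⊔ Y) ∧
    ψ '' (X : Set S) = (Y : Set S)

/-- `F` is `Γ`-inductive. -/
def GammaInductive (T : Subgroup S) (F : HomPred S) (Γ : Set (Subgroup S)) : Prop :=
  ∀ X ∈ Γ, ∃ Y ∈ FConj F X, NormalizerInductive T F Y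

/-- `F` is inductive (i.e. `Sub(T)`-inductive). -/
def InductiveFS (T : Subgroup S) (F : HomPred S) : Prop :=
  ∀ X : Subgroup S, X ≤ T → ∃ Y ∈ FConj F X, NormalizerInductive T F Y

/-- `⟨Φ⟩_T`: the smallest fusion system on `T` all of whose homomorphisms are
`Famb`-homomorphisms and whose hom-sets contain `Φ`. -/
def GenFS (T : Subgroup S) (Famb : HomPred S) (Φ : HomPred S) : HomPred S :=
  fun f X Y => ∀ E : HomPred S, IsFusionSystem T E →
    (∀ g A B, E g A B → Famb g A B) → (∀ g A B, Φ g A B → E g A B) → E f X Y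

/-- The generating set `Φ` for `N_F(V)`: `F`-isomorphisms between subgroups of
`N_S(V)` extending to `F`-isomorphisms `XV → YV` restricting to an automorphism of `V`. -/
def NPhi (F : HomPred S) (V : Subgroup S) : HomPred S :=
  fun f X Y => X ≤ Subgroup.normalizer (V : Set S) ∧ Y ≤ Subgroup.normalizer (V : Set S) ∧ IsFIso F f X Y ∧
    ∃ g, IsFIso F g (X ⊔ V) (Y ⊔ V) ∧ Set.EqOn g f (X : Set S) ∧
      g '' (V : Set S) = (V : Set S)

/-- The fusion system `N_F(V)` on `N_S(V)`. -/
def NFus (F : HomPred S) (V : Subgroup S) : HomPred S :=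
  GenFS (Subgroup.normalizer (V : Set S)) F (NPhi F V)

/-- The generating set `Ψ` for `C_F(V)`: `F`-isomorphisms between subgroups of
`C_S(V)` extending to `F`-isomorphisms `XV → YV` restricting to the identity on `V`. -/
def CPsi (F : HomPred S) (V : Subgroup S) : HomPred S :=
  fun f X Y => X ≤ Subgroup.centralizer (V : Set S) ∧
    Y ≤ Subgroup.centralizer (V : Set S) ∧ IsFIso F f X Y ∧
    ∃ g, IsFIso F g (X ⊔ V) (Y ⊔ V) ∧ Set.EqOn g f (X : Set S) ∧ ∀ v ∈ V, g v = v

/-- The fusion system `C_F(V)` on `C_S(V)`. -/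
def CFus (F : HomPred S) (V : Subgroup S) : HomPred S :=
  GenFS (Subgroup.centralizer (V : Set S)) F (CPsi F V)

/-- `X ↦ X• = (VX)⋆ ⊓ N_S(V)`. -/
def bulletStar (star : Subgroup S → Subgroup S) (V : Subgroup S) :
    Subgroup S → Subgroup S :=
  fun X => star (V ⊔ X) ⊓ Subgroup.normalizer (V : Set S)

/-- `N_Ω(V) = {X• : X ≤ N_S(V)}`. -/
def bulletOmega (star : Subgroup S → Subgroup S) (V : Subgroup S) : Set (Subgroup S) :=
  {A | ∃ X : Subgroup S, X ≤ Subgroup.normalizer (V : Set S) ∧ A = bulletStar star V X}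

/-- `A ↦ A° = (VA)⋆ ⊓ C_S(V)`. -/
def circStar (star : Subgroup S → Subgroup S) (V : Subgroup S) :
    Subgroup S → Subgroup S :=
  fun A => star (V ⊔ A) ⊓ Subgroup.centralizer (V : Set S)

/-- `C_Ω(V) = {A° : A ≤ C_S(V)}`. -/
def circOmega (star : Subgroup S → Subgroup S) (V : Subgroup S) : Set (Subgroup S) :=
  {A | ∃ X : Subgroup S, X ≤ Subgroup.centralizer (V : Set S) ∧ A = circStar star V X}

/-- `T` is strongly closed in `F`. -/
def StronglyClosedF (F : HomPred S) (T : Subgroup S) : Prop :=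
  ∀ X : Subgroup S, X ≤ T → ∀ Y ∈ FConj F X, Y ≤ T

section Aux
variable {S : Type*} [Group S] {F : HomPred S}

/-- The image of a subgroup of the domain under an `F`-homomorphism is a subgroup,
and the homomorphism corestricts to it. -/
lemma image_subgroup (hF : IsFusionSystem ⊤ F) {ψ : S → S} {X Y : Subgroup S}
    (hψ : F ψ X Y) {A : Subgroup S} (hA : A ≤ X) :
    ∃ P : Subgroup S, (P : Set S) = ψ '' (A : Set S) ∧ F ψ A P ∧ P ≤ Y := by
  have hmul := hF.map_mul' ψ X Y hψ
  have h1 : ψ 1 = 1 := by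
    have := hmul 1 X.one_mem 1 X.one_mem
    rw [one_mul] at this
    exact (left_eq_mul.mp this)
  have hinv : ∀ x ∈ X, ψ x⁻¹ = (ψ x)⁻¹ := by
    intro x hx
    have := hmul x⁻¹ (X.inv_mem hx) x hx
    rw [inv_mul_cancel, h1] at this
    exact eq_inv_of_mul_eq_one_left this.symm
  refine ⟨{ carrier := ψ '' (A : Set S)
            one_mem' := ⟨1, A.one_mem, h1⟩
            mul_mem' := ?_
            inv_mem' := ?_ }, rfl, ?_, ?_⟩
  · rintro a b ⟨x, hx, rfl⟩ ⟨y, hy, rfl⟩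
    exact ⟨x * y, A.mul_mem hx hy, hmul x (hA hx) y (hA hy)⟩
  · rintro a ⟨x, hx, rfl⟩
    exact ⟨x⁻¹, A.inv_mem hx, hinv x (hA hx)⟩
  · refine hF.restrict_mem ψ X Y A _ hψ hA ?_ ?_
    · rintro p ⟨x, hx, rfl⟩
      exact hF.mapsTo ψ X Y hψ (hA hx)
    · intro x hx
      exact ⟨x, hx, rfl⟩
  · rintro p ⟨x, hx, rfl⟩
    exact hF.mapsTo ψ X Y hψ (hA hx)

/-- `F`-homomorphisms take joins of subgroups to joins of their images. -/
lemma image_sup (hF : IsFusionSystem ⊤ F) {ψ : S → S} {X Y : Subgroup S}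
    (hψ : F ψ X Y) {A B P Q : Subgroup S} (hA : A ≤ X) (hB : B ≤ X)
    (hP : (P : Set S) = ψ '' (A : Set S)) (hQ : (Q : Set S) = ψ '' (B : Set S)) :
    ψ '' ((A ⊔ B : Subgroup S) : Set S) = ((P ⊔ Q : Subgroup S) : Set S) := by
  have hmul := hF.map_mul' ψ X Y hψ
  let Φ : X →* S := MonoidHom.mk' (fun x => ψ (x : S))
    (fun a b => hmul a a.2 b b.2)
  have key : ∀ C : Subgroup S, C ≤ X →
      ((Subgroup.map Φ (C.subgroupOf X) : Subgroup S) : Set S) = ψ '' (C : Set S) := by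
    intro C hC
    ext y
    simp only [Subgroup.coe_map, Set.mem_image, SetLike.mem_coe]
    constructor
    · rintro ⟨x, hx, rfl⟩
      exact ⟨x, (Subgroup.mem_subgroupOf).mp hx, rfl⟩
    · rintro ⟨s, hs, rfl⟩
      exact ⟨⟨s, hC hs⟩, (Subgroup.mem_subgroupOf).mpr hs, rfl⟩
  have hPeq : Subgroup.map Φ (A.subgroupOf X) = P :=
    SetLike.coe_injective ((key A hA).trans hP.symm)
  have hQeq : Subgroup.map Φ (B.subgroupOf X) = Q :=
    SetLike.coe_injective ((key B hB).trans hQ.symm)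
  calc ψ '' ((A ⊔ B : Subgroup S) : Set S)
      = ((Subgroup.map Φ ((A ⊔ B).subgroupOf X) : Subgroup S) : Set S) :=
        (key _ (sup_le hA hB)).symm
    _ = ((P ⊔ Q : Subgroup S) : Set S) := by
        rw [Subgroup.subgroupOf_sup hA hB, Subgroup.map_sup, hPeq, hQeq]

/-- `star ⊥` is the least element of `Ω`. -/
lemma star_bot_le_of_mem {Ω : Set (Subgroup S)} {star : Subgroup S → Subgroup S}
    (hΩ : IsStratification ⊤ F Ω star) {A : Subgroup S} (hA : A ∈ Ω) :
    star ⊥ ≤ A := by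
  have := hΩ.star_mono ⊥ A le_top le_top bot_le
  rwa [hΩ.star_fix A hA] at this

end Aux

/-- Lemma 2.5. `1⋆` is normal in `F`; in particular `1⋆ ≤ Soc(F)`. -/
theorem star_bot_normalInF
    {S : Type*} [Group S] (F : HomPred S)
    (Ω : Set (Subgroup S)) (star : Subgroup S → Subgroup S)
    (hF : IsFusionSystem ⊤ F) (hΩ : IsStratification ⊤ F Ω star) :
    NormalInF ⊤ F (star ⊥) ∧
      ∀ M : Subgroup S, IsGreatest {N : Subgroup S | NormalInF ⊤ F N} M → star ⊥ ≤ M := by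
  classical
  set N := star (⊥ : Subgroup S) with hN
  have hNΩ : N ∈ Ω := hΩ.star_mem ⊥ le_top
  -- the conjugation property
  have hconj : ∀ g : S, ∀ n ∈ N, g⁻¹ * n * g ∈ N := by
    have main : ∀ h : S, ∃ P : Subgroup S,
        (P : Set S) = (fun x => h⁻¹ * x * h) '' (N : Set S) ∧ N ≤ P := by
      intro h
      have hc : F (fun x => h⁻¹ * x * h) N ⊤ :=
        hF.conj_mem h trivial N ⊤ le_top le_top (fun _ _ => trivial)
      obtain ⟨P, hPc, hFP, -⟩ := image_subgroup hF hc (le_refl N)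
      have hPΩ : P ∈ Ω :=
        hΩ.conj_invariant N hNΩ _ P ⟨hFP, hPc.symm⟩
      exact ⟨P, hPc, star_bot_le_of_mem hΩ hPΩ⟩
    intro g n hn
    obtain ⟨P, hPc, hNP⟩ := main g⁻¹
    have : n ∈ (P : Set S) := hNP hn
    rw [hPc] at this
    obtain ⟨m, hm, hme⟩ := this
    simp only [inv_inv] at hme
    have : g⁻¹ * n * g = m := by
      rw [← hme]; group
    rwa [this]
  -- the extension property
  have hext : ∀ f X Y, IsFIso F f X Y →
      ∃ g, IsFIso F g (X ⊔ N) (Y ⊔ N) ∧ Set.EqOn g f (X : Set S) ∧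
        g '' (N : Set S) = (N : Set S) := by
    intro f X Y hfiso
    obtain ⟨ψ, hψiso, hψeq⟩ := hΩ.extend_star f X Y hfiso
    obtain ⟨hψ, himg⟩ := hψiso
    have hNX : N ≤ star X := star_bot_le_of_mem hΩ (hΩ.star_mem X le_top)
    have hNY : N ≤ star Y := star_bot_le_of_mem hΩ (hΩ.star_mem Y le_top)
    have hXX : X ≤ star X := hΩ.le_star X le_top
    have hYY : Y ≤ star Y := hΩ.le_star Y le_top
    -- P = ψ(N)
    obtain ⟨P, hPc, hFP, hPY⟩ := image_subgroup hF hψ hNX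
    have hPΩ : P ∈ Ω := hΩ.conj_invariant N hNΩ _ P ⟨hFP, hPc.symm⟩
    have hNP : N ≤ P := star_bot_le_of_mem hΩ hPΩ
    -- inverse of ψ
    obtain ⟨γ, hγ, hγψ⟩ := hF.inv_mem ψ (star X) (star Y) hψ
    rw [himg, Subgroup.closure_eq] at hγ
    -- Q = γ(N)
    obtain ⟨Q, hQc, hFQ, hQX⟩ := image_subgroup hF hγ hNY
    have hQΩ : Q ∈ Ω := hΩ.conj_invariant N hNΩ _ Q ⟨hFQ, hQc.symm⟩
    have hNQ : N ≤ Q := star_bot_le_of_mem hΩ hQΩ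
    -- ψ ∘ γ = id on star Y
    have hψγ : ∀ y ∈ star Y, ψ (γ y) = y := by
      intro y hy
      have : y ∈ ψ '' ((star X : Subgroup S) : Set S) := by rw [himg]; exact hy
      obtain ⟨x, hx, rfl⟩ := this
      rw [hγψ x hx]
    -- ψ '' Q = N
    have hψQ : ψ '' (Q : Set S) = (N : Set S) := by
      rw [hQc, ← Set.image_comp]
      ext n
      constructor
      · rintro ⟨m, hm, rfl⟩
        simp only [Function.comp_apply]
        rw [hψγ m (hNY hm)]
        exact hm
      · intro hn
        exact ⟨n, hn, by simp only [Function.comp_apply]; rw [hψγ n (hNY hn)]⟩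
    -- ψ '' N = N
    have hψN : ψ '' (N : Set S) = (N : Set S) := by
      apply Set.Subset.antisymm
      · calc ψ '' (N : Set S) ⊆ ψ '' (Q : Set S) :=
              Set.image_mono (show (N : Set S) ⊆ (Q : Set S) from hNQ)
          _ = (N : Set S) := hψQ
      · intro n hn
        have : n ∈ (P : Set S) := hNP hn
        rwa [hPc] at this
    -- ψ '' X = Y
    have hψX : ψ '' (X : Set S) = (Y : Set S) :=
      (Set.image_congr hψeq).trans hfiso.2
    -- image of the join
    have hsup : ψ '' ((X ⊔ N : Subgroup S) : Set S) = ((Y ⊔ N : Subgroup S) : Set S) :=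
      image_sup hF hψ hXX hNX hψX.symm hψN.symm
    refine ⟨ψ, ⟨?_, hsup⟩, hψeq, hψN⟩
    refine hF.restrict_mem ψ (star X) (star Y) _ _ hψ (sup_le hXX hNX)
      (sup_le hYY hNY) ?_
    intro x hx
    have : ψ x ∈ ψ '' ((X ⊔ N : Subgroup S) : Set S) := ⟨x, hx, rfl⟩
    rwa [hsup] at this
  have hnormal : NormalInF ⊤ F N :=
    ⟨le_top, fun g _ => hconj g, hext⟩
  exact ⟨hnormal, fun M hM => hM.2 hnormal⟩
end

section
/- Let (F,Ω,⋆) be a stratified fusion system on a group S, let V ≤ S, and set D = C_S(V). For each subgroup A ≤ D set A° = (VA)⋆ ∩ D (here VA is a subgroup since A centralizes V), and set C_Ω(V) = {A° : A ≤ D}. Then: (a) (C_Ω(V),°) is a stratification on the fusion system C_F(V) on D; (b) the map A ↦ (VA)⋆ is an injective homomorphism of posets C_Ω(V) → Ω; (c) if the maximal length dim(C_Ω(V)) of a strictly increasing chain in C_Ω(V) equals dim(Ω), then Z(V) ≤ 1⋆ and (VD)⋆ = S, where Z(V) is the center of V and 1 denotes the trivial subgroup of S. -/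
variable {S : Type*} [Group S]

namespace StratCent

variable {S : Type*} [Group S] {F : HomPred S}

lemma map_one (hF : IsFusionSystem ⊤ F) {f : S → S} {X Y : Subgroup S} (hf : F f X Y) :
    f 1 = 1 := by
  have h := hF.map_mul' f X Y hf 1 X.one_mem 1 X.one_mem
  rw [mul_one] at h
  exact (left_eq_mul.mp h)

lemma map_inv (hF : IsFusionSystem ⊤ F) {f : S → S} {X Y : Subgroup S} (hf : F f X Y)
    (x : S) (hx : x ∈ X) : f x⁻¹ = (f x)⁻¹ := by
  have h := hF.map_mul' f X Y hf x⁻¹ (X.inv_mem hx) x hx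
  rw [inv_mul_cancel, map_one hF hf] at h
  exact eq_inv_of_mul_eq_one_left h.symm

lemma exists_preimage (hF : IsFusionSystem ⊤ F) {f : S → S} {X Y : Subgroup S}
    (hf : F f X Y) (R : Subgroup S) :
    ∃ K : Subgroup S, ∀ x : S, x ∈ K ↔ x ∈ X ∧ f x ∈ R := by
  refine ⟨{ carrier := {x | x ∈ X ∧ f x ∈ R}
            one_mem' := ⟨X.one_mem, by rw [map_one hF hf]; exact R.one_mem⟩
            mul_mem' := ?_
            inv_mem' := ?_ }, fun x => Iff.rfl⟩
  · rintro a b ⟨ha, hfa⟩ ⟨hb, hfb⟩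
    exact ⟨X.mul_mem ha hb, by
      rw [hF.map_mul' f X Y hf a ha b hb]; exact R.mul_mem hfa hfb⟩
  · rintro a ⟨ha, hfa⟩
    exact ⟨X.inv_mem ha, by rw [map_inv hF hf a ha]; exact R.inv_mem hfa⟩

lemma mapsTo_sup (hF : IsFusionSystem ⊤ F) {f : S → S} {X Y : Subgroup S} (hf : F f X Y)
    {P Q R : Subgroup S} (hP : P ≤ X) (hQ : Q ≤ X)
    (h1 : ∀ p ∈ P, f p ∈ R) (h2 : ∀ q ∈ Q, f q ∈ R) : ∀ x ∈ P ⊔ Q, f x ∈ R := by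
  obtain ⟨K, hK⟩ := exists_preimage hF hf R
  intro x hx
  have hle : P ⊔ Q ≤ K :=
    sup_le (fun p hp => (hK p).2 ⟨hP hp, h1 p hp⟩) (fun q hq => (hK q).2 ⟨hQ hq, h2 q hq⟩)
  exact ((hK x).1 (hle hx)).2

lemma exists_image (hF : IsFusionSystem ⊤ F) {f : S → S} {X Y : Subgroup S}
    (hf : F f X Y) {P : Subgroup S} (hP : P ≤ X) :
    ∃ H : Subgroup S, (H : Set S) = f '' (P : Set S) := by
  refine ⟨{ carrier := f '' (P : Set S)
            one_mem' := ⟨1, P.one_mem, map_one hF hf⟩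
            mul_mem' := ?_
            inv_mem' := ?_ }, rfl⟩
  · rintro a b ⟨p, hp, rfl⟩ ⟨q, hq, rfl⟩
    exact ⟨p * q, P.mul_mem hp hq, hF.map_mul' f X Y hf p (hP hp) q (hP hq)⟩
  · rintro a ⟨p, hp, rfl⟩
    exact ⟨p⁻¹, P.inv_mem hp, map_inv hF hf p (hP hp)⟩

lemma closure_image (hF : IsFusionSystem ⊤ F) {f : S → S} {X Y : Subgroup S}
    (hf : F f X Y) {P : Subgroup S} (hP : P ≤ X) :
    ∃ H : Subgroup S, (H : Set S) = f '' (P : Set S) ∧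
      Subgroup.closure (f '' (P : Set S)) = H := by
  obtain ⟨H, hH⟩ := exists_image hF hf hP
  exact ⟨H, hH, by rw [← hH, Subgroup.closure_eq]⟩

end StratCent

namespace StratCent

variable {S : Type*} [Group S] {F : HomPred S}

/-- centralizer conjugation is trivial -/
lemma conj_eq_self {V : Subgroup S} {g : S}
    (hg : g ∈ Subgroup.centralizer (V : Set S)) {v : S} (hv : v ∈ V) :
    g⁻¹ * v * g = v := by
  have h := Subgroup.mem_centralizer_iff.mp hg v hv
  rw [mul_assoc, h, ← mul_assoc, inv_mul_cancel, one_mul]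

/-- The extension predicate: `F`-homs between subgroups of `C_S(V)` that extend to an
`F`-hom `VX → VY` restricting to the identity on `V`. -/
def EExt (F : HomPred S) (V : Subgroup S) : HomPred S :=
  fun f X Y => X ≤ Subgroup.centralizer (V : Set S) ∧
    Y ≤ Subgroup.centralizer (V : Set S) ∧ F f X Y ∧
    ∃ g, F g (V ⊔ X) (V ⊔ Y) ∧ Set.EqOn g f (X : Set S) ∧ ∀ v ∈ V, g v = v

lemma eext_isFusion (hF : IsFusionSystem ⊤ F) (V : Subgroup S) :
    IsFusionSystem (Subgroup.centralizer (V : Set S)) (EExt F V) := by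
  set D := Subgroup.centralizer (V : Set S) with hD
  constructor
  · exact fun f X Y hf => ⟨hf.1, hf.2.1⟩
  · exact fun f X Y hf => hF.mapsTo f X Y hf.2.2.1
  · exact fun f X Y hf => hF.injOn f X Y hf.2.2.1
  · exact fun f X Y hf => hF.map_mul' f X Y hf.2.2.1
  · -- of_eqOn
    rintro f g X Y ⟨hX, hY, hf, gext, hgext, heq, hid⟩ heq2
    exact ⟨hX, hY, hF.of_eqOn f g X Y hf heq2, gext, hgext,
      fun x hx => (heq hx).trans (heq2 hx).symm, hid⟩
  · -- conj_mem
    intro g hg X Y hX hY hconj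
    have hgv : ∀ v ∈ V, g⁻¹ * v * g = v := fun v hv => conj_eq_self hg hv
    have hmaps : ∀ x ∈ V ⊔ X, g⁻¹ * x * g ∈ V ⊔ Y := by
      have hK : ∃ K : Subgroup S, ∀ x : S, x ∈ K ↔ g⁻¹ * x * g ∈ V ⊔ Y := by
        refine ⟨{ carrier := {x | g⁻¹ * x * g ∈ V ⊔ Y}
                  one_mem' := by simpa using (V ⊔ Y).one_mem
                  mul_mem' := ?_
                  inv_mem' := ?_ }, fun x => Iff.rfl⟩
        · intro a b ha hb
          have : g⁻¹ * (a * b) * g = (g⁻¹ * a * g) * (g⁻¹ * b * g) := by group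
          simpa [Set.mem_setOf_eq, this] using (V ⊔ Y).mul_mem ha hb
        · intro a ha
          have : g⁻¹ * a⁻¹ * g = (g⁻¹ * a * g)⁻¹ := by group
          simpa [Set.mem_setOf_eq, this] using (V ⊔ Y).inv_mem ha
      obtain ⟨K, hK⟩ := hK
      intro x hx
      have hle : V ⊔ X ≤ K := sup_le
        (fun v hv => (hK v).2 (by rw [hgv v hv]; exact Subgroup.mem_sup_left hv))
        (fun x hx => (hK x).2 (Subgroup.mem_sup_right (hconj x hx)))
      exact (hK x).1 (hle hx)
    refine ⟨hX, hY, hF.conj_mem g (Subgroup.mem_top g) X Y le_top le_top hconj,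
      fun x => g⁻¹ * x * g, hF.conj_mem g (Subgroup.mem_top g) (V ⊔ X) (V ⊔ Y) le_top le_top hmaps,
      fun x _ => rfl, hgv⟩
  · -- comp_mem
    rintro f g X Y Z ⟨hX, hY, hf, fext, hfext, heqf, hidf⟩ ⟨_, hZ, hg, gext, hgext, heqg, hidg⟩
    refine ⟨hX, hZ, hF.comp_mem f g X Y Z hf hg, gext ∘ fext,
      hF.comp_mem fext gext (V ⊔ X) (V ⊔ Y) (V ⊔ Z) hfext hgext, ?_, ?_⟩
    · intro x hx
      have hfx : f x ∈ Y := hF.mapsTo f X Y hf hx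
      simp only [Function.comp_apply, heqf hx]
      exact heqg hfx
    · intro v hv
      simp only [Function.comp_apply, hidf v hv]
      exact hidg v hv
  · -- restrict_mem
    rintro f X Y X₀ Y₀ ⟨hX, hY, hf, fext, hfext, heqf, hidf⟩ hX₀ hY₀ hm
    refine ⟨hX₀.trans hX, hY₀.trans hY, hF.restrict_mem f X Y X₀ Y₀ hf hX₀ hY₀ hm, fext,
      ?_, fun x hx => heqf (hX₀ hx), hidf⟩
    refine hF.restrict_mem fext (V ⊔ X) (V ⊔ Y) (V ⊔ X₀) (V ⊔ Y₀) hfext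
      (sup_le_sup_left hX₀ V) (sup_le_sup_left hY₀ V) ?_
    intro x hx
    exact mapsTo_sup hF hfext le_sup_left (hX₀.trans le_sup_right)
      (fun v hv => by rw [hidf v hv]; exact Subgroup.mem_sup_left hv)
      (fun p hp => by
        rw [heqf (hX₀ hp)]; exact Subgroup.mem_sup_right (hm hp))
      x hx
  · -- corestrict_mem
    rintro f X Y ⟨hX, hY, hf, fext, hfext, heqf, hidf⟩
    obtain ⟨H, hHcar, hHcl⟩ := closure_image hF hf (le_refl X)
    have hHY : H ≤ Y := by
      rw [← SetLike.coe_subset_coe, hHcar]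
      exact Set.image_subset_iff.mpr (hF.mapsTo f X Y hf)
    refine ⟨hX, (hHcl ▸ hHY).trans hY, hF.corestrict_mem f X Y hf, fext, ?_, heqf, hidf⟩
    rw [hHcl]
    refine hF.restrict_mem fext (V ⊔ X) (V ⊔ Y) (V ⊔ X) (V ⊔ H) hfext le_rfl
      (sup_le_sup_left hHY V) ?_
    intro x hx
    exact mapsTo_sup hF hfext le_sup_left le_sup_right
      (fun v hv => by rw [hidf v hv]; exact Subgroup.mem_sup_left hv)
      (fun p hp => by
        rw [heqf hp]
        exact Subgroup.mem_sup_right (by rw [← SetLike.mem_coe, hHcar]; exact ⟨p, hp, rfl⟩))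
      x hx
  · -- inv_mem
    rintro f X Y ⟨hX, hY, hf, fext, hfext, heqf, hidf⟩
    obtain ⟨H, hHcar, hHcl⟩ := closure_image hF hf (le_refl X)
    have hHY : H ≤ Y := by
      rw [← SetLike.coe_subset_coe, hHcar]
      exact Set.image_subset_iff.mpr (hF.mapsTo f X Y hf)
    obtain ⟨hext, hhext, hinv⟩ := hF.inv_mem fext (V ⊔ X) (V ⊔ Y) hfext
    -- image of V ⊔ X under fext equals V ⊔ H
    obtain ⟨W, hWcar⟩ := exists_image hF hfext (le_refl (V ⊔ X))
    have hVW : V ≤ W := fun v hv => by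
      rw [← SetLike.mem_coe, hWcar]
      exact ⟨v, Subgroup.mem_sup_left hv, hidf v hv⟩
    have hHW : H ≤ W := by
      intro y hy
      rw [← SetLike.mem_coe, hHcar] at hy
      obtain ⟨x, hx, rfl⟩ := hy
      rw [← SetLike.mem_coe, hWcar]
      exact ⟨x, Subgroup.mem_sup_right hx, heqf hx⟩
    have himsub : fext '' ((V ⊔ X : Subgroup S) : Set S) ⊆ ((V ⊔ H : Subgroup S) : Set S) := by
      rintro y ⟨x, hx, rfl⟩
      exact mapsTo_sup hF hfext le_sup_left le_sup_right
        (fun v hv => by rw [hidf v hv]; exact Subgroup.mem_sup_left hv)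
        (fun p hp => by
          rw [heqf hp]
          exact Subgroup.mem_sup_right (by rw [← SetLike.mem_coe, hHcar]; exact ⟨p, hp, rfl⟩))
        x hx
    have himeq : fext '' ((V ⊔ X : Subgroup S) : Set S) = ((V ⊔ H : Subgroup S) : Set S) := by
      refine Set.Subset.antisymm himsub ?_
      rw [← hWcar]
      exact SetLike.coe_subset_coe.mpr (sup_le hVW hHW)
    have hcl : Subgroup.closure (fext '' ((V ⊔ X : Subgroup S) : Set S)) = V ⊔ H := by
      rw [himeq, Subgroup.closure_eq]
    rw [hcl] at hhext
    have hhextid : ∀ v ∈ V, hext v = v := fun v hv => by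
      have := hinv v (Subgroup.mem_sup_left hv)
      rwa [hidf v hv] at this
    have hmapsH : ∀ y ∈ H, hext y ∈ X := by
      intro y hy
      rw [← SetLike.mem_coe, hHcar] at hy
      obtain ⟨x, hx, rfl⟩ := hy
      rw [← heqf hx, hinv x (Subgroup.mem_sup_right hx)]
      exact hx
    refine ⟨hext, ?_, ?_⟩
    · rw [hHcl]
      exact ⟨hHY.trans hY, hX,
        hF.restrict_mem hext (V ⊔ H) (V ⊔ X) H X hhext le_sup_right le_sup_right hmapsH,
        hext, hhext, fun x _ => rfl, hhextid⟩
    · intro x hx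
      rw [← heqf hx]
      exact hinv x (Subgroup.mem_sup_right hx)

lemma cpsi_le_eext {V : Subgroup S} {f : S → S} {X Y : Subgroup S}
    (h : CPsi F V f X Y) : EExt F V f X Y := by
  obtain ⟨hX, hY, hiso, g, hgiso, heq, hid⟩ := h
  exact ⟨hX, hY, hiso.1, g, by rw [sup_comm V X, sup_comm V Y]; exact hgiso.1, heq, hid⟩

lemma cfus_le_eext (hF : IsFusionSystem ⊤ F) {V : Subgroup S} {f : S → S} {X Y : Subgroup S}
    (h : CFus F V f X Y) : EExt F V f X Y :=
  h (EExt F V) (eext_isFusion hF V) (fun _ _ _ hg => hg.2.2.1) (fun _ _ _ hg => cpsi_le_eext hg)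

end StratCent

namespace StratCent

variable {S : Type*} [Group S] {F : HomPred S} {Ω : Set (Subgroup S)}
  {star : Subgroup S → Subgroup S}

lemma le_star' (hΩ : IsStratification ⊤ F Ω star) (X : Subgroup S) : X ≤ star X :=
  hΩ.le_star X le_top

lemma star_star (hΩ : IsStratification ⊤ F Ω star) (X : Subgroup S) :
    star (star X) = star X := hΩ.star_fix _ (hΩ.star_mem X le_top)

lemma star_mono' (hΩ : IsStratification ⊤ F Ω star) {X Y : Subgroup S} (h : X ≤ Y) :
    star X ≤ star Y := hΩ.star_mono X Y le_top le_top h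

lemma maps_cent (hF : IsFusionSystem ⊤ F) {V : Subgroup S} {g : S → S} {A B : Subgroup S}
    (hg : F g A B) (hid : ∀ v ∈ V, g v = v) (hVA : V ≤ A) {d : S} (hd : d ∈ A)
    (hdD : d ∈ Subgroup.centralizer (V : Set S)) :
    g d ∈ Subgroup.centralizer (V : Set S) := by
  rw [Subgroup.mem_centralizer_iff]
  intro v hv
  calc v * g d = g v * g d := by rw [hid v hv]
    _ = g (v * d) := (hF.map_mul' _ _ _ hg v (hVA hv) d hd).symm
    _ = g (d * v) := by rw [Subgroup.mem_centralizer_iff.mp hdD v hv]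
    _ = g d * g v := hF.map_mul' _ _ _ hg d hd v (hVA hv)
    _ = g d * v := by rw [hid v hv]

lemma star_iso_package (hF : IsFusionSystem ⊤ F) (hΩ : IsStratification ⊤ F Ω star)
    {V : Subgroup S} {f : S → S} {X Y : Subgroup S} (hiso : IsFIso (CFus F V) f X Y) :
    ∃ G H : S → S,
      IsFIso F G (star (V ⊔ X)) (star (V ⊔ Y)) ∧
      F H (star (V ⊔ Y)) (star (V ⊔ X)) ∧
      Set.EqOn G f (X : Set S) ∧
      (∀ v ∈ V, G v = v) ∧ (∀ v ∈ V, H v = v) ∧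
      (∀ x ∈ star (V ⊔ X), H (G x) = x) ∧
      (∀ y ∈ star (V ⊔ Y), G (H y) = y) ∧
      X ≤ Subgroup.centralizer (V : Set S) ∧ Y ≤ Subgroup.centralizer (V : Set S) := by
  obtain ⟨hXD, hYD, hfF, g, hg, heq, hid⟩ := cfus_le_eext hF hiso.1
  obtain ⟨W, hW⟩ := exists_image hF hg (le_refl (V ⊔ X))
  have hVW : V ≤ W := fun v hv => by
    rw [← SetLike.mem_coe, hW]; exact ⟨v, Subgroup.mem_sup_left hv, hid v hv⟩
  have hYW : Y ≤ W := by
    intro y hy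
    rw [← SetLike.mem_coe, ← hiso.2] at hy
    obtain ⟨x, hx, rfl⟩ := hy
    rw [← SetLike.mem_coe, hW]
    exact ⟨x, Subgroup.mem_sup_right hx, heq hx⟩
  have himeq : g '' ((V ⊔ X : Subgroup S) : Set S) = ((V ⊔ Y : Subgroup S) : Set S) := by
    refine Set.Subset.antisymm (Set.image_subset_iff.mpr (hF.mapsTo _ _ _ hg)) ?_
    rw [← hW]
    exact SetLike.coe_subset_coe.mpr (sup_le hVW hYW)
  obtain ⟨G, hGiso, hGeq⟩ := hΩ.extend_star g (V ⊔ X) (V ⊔ Y) ⟨hg, himeq⟩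
  obtain ⟨H, hH, hHinv⟩ := hF.inv_mem G (star (V ⊔ X)) (star (V ⊔ Y)) hGiso.1
  have hcl : Subgroup.closure (G '' ((star (V ⊔ X) : Subgroup S) : Set S)) = star (V ⊔ Y) := by
    rw [hGiso.2, Subgroup.closure_eq]
  rw [hcl] at hH
  have hVle : (V : Subgroup S) ≤ star (V ⊔ X) := le_sup_left.trans (le_star' hΩ _)
  have hGid : ∀ v ∈ V, G v = v := fun v hv => by
    rw [hGeq (Subgroup.mem_sup_left hv)]; exact hid v hv
  refine ⟨G, H, hGiso, hH, ?_, hGid, ?_, hHinv, ?_, hXD, hYD⟩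
  · intro x hx
    rw [hGeq (Subgroup.mem_sup_right hx)]; exact heq hx
  · intro v hv
    have := hHinv v (hVle hv)
    rwa [hGid v hv] at this
  · intro y hy
    rw [← SetLike.mem_coe, ← hGiso.2] at hy
    obtain ⟨x, hx, rfl⟩ := hy
    rw [hHinv x hx]

lemma circ_le_cent {V A : Subgroup S} (hA : A ∈ circOmega star V) :
    A ≤ Subgroup.centralizer (V : Set S) := by
  obtain ⟨X, hX, rfl⟩ := hA
  exact inf_le_right

lemma circ_fix (hΩ : IsStratification ⊤ F Ω star) {V A : Subgroup S}
    (hA : A ∈ circOmega star V) : circStar star V A = A := by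
  obtain ⟨X, hX, rfl⟩ := hA
  set D := Subgroup.centralizer (V : Set S) with hD
  set P := star (V ⊔ X) with hP
  have h1 : star (V ⊔ (P ⊓ D)) = P := by
    refine le_antisymm ?_ ?_
    · have : V ⊔ (P ⊓ D) ≤ P :=
        sup_le (le_sup_left.trans (le_star' hΩ _)) inf_le_left
      calc star (V ⊔ (P ⊓ D)) ≤ star P := star_mono' hΩ this
        _ = P := star_star hΩ _
    · refine star_mono' hΩ (sup_le le_sup_left (le_trans ?_ le_sup_right))
      exact le_inf (le_sup_right.trans (le_star' hΩ _)) hX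
  show star (V ⊔ (P ⊓ D)) ⊓ D = P ⊓ D
  rw [h1]


lemma chain_lift (hΩ : IsStratification ⊤ F Ω star) (V : Subgroup S) {n : ℕ}
    {c : Fin (n + 1) → Subgroup S} (hc : StrictMono c)
    (hmem : ∀ i, c i ∈ circOmega star V) :
    StrictMono (fun i => star (V ⊔ c i)) ∧ ∀ i, star (V ⊔ c i) ∈ Ω := by
  refine ⟨?_, fun i => hΩ.star_mem _ le_top⟩
  intro i j hij
  have h1 := hc hij
  refine lt_of_le_of_ne (star_mono' hΩ (sup_le_sup_left h1.le V)) ?_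
  intro heq
  apply h1.ne
  have e1 := circ_fix hΩ (hmem i)
  have e2 := circ_fix hΩ (hmem j)
  calc c i = circStar star V (c i) := e1.symm
    _ = circStar star V (c j) := by simp only [circStar, heq]
    _ = c j := e2

end StratCent


open StratCent in
/-- Lemma 2.6, centralizer part. `(C_Ω(V), °)` is a stratification on
`C_F(V)`; the map `A ↦ (VA)⋆` is an injective homomorphism of posets `C_Ω(V) → Ω`; and if
`dim(C_Ω(V)) = dim(Ω)` then `Z(V) ≤ 1⋆` and `(VD)⋆ = S`, where `D = C_S(V)`. -/
theorem stratification_on_centralizer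
    {S : Type*} [Group S] (F : HomPred S)
    (Ω : Set (Subgroup S)) (star : Subgroup S → Subgroup S)
    (hF : IsFusionSystem ⊤ F) (hΩ : IsStratification ⊤ F Ω star)
    (V : Subgroup S) :
    IsStratification (Subgroup.centralizer (V : Set S)) (CFus F V)
        (circOmega star V) (circStar star V) ∧
    ((∀ A ∈ circOmega star V, star (V ⊔ A) ∈ Ω) ∧
      (∀ A ∈ circOmega star V, ∀ B ∈ circOmega star V, A ≤ B →
        star (V ⊔ A) ≤ star (V ⊔ B)) ∧
      Set.InjOn (fun A => star (V ⊔ A)) (circOmega star V)) ∧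
    (dimOmega (circOmega star V) = dimOmega Ω →
      Subgroup.centralizer (V : Set S) ⊓ V ≤ star ⊥ ∧
        star (V ⊔ Subgroup.centralizer (V : Set S)) = ⊤) := by
  set D := Subgroup.centralizer (V : Set S) with hD
  have hstrat : IsStratification D (CFus F V) (circOmega star V) (circStar star V) := by
    refine { omega_le := ?_, star_mem := ?_, star_fix := ?_, star_mono := ?_,
             finDim := ?_, conj_invariant := ?_, le_star := ?_, extend_star := ?_ }
    · exact fun A hA => circ_le_cent hA
    · exact fun X hX => ⟨X, hX, rfl⟩
    · exact fun A hA => circ_fix hΩ hA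
    · intro X Y _ _ h
      exact inf_le_inf_right _ (star_mono' hΩ (sup_le_sup_left h V))
    · obtain ⟨N, hN⟩ := hΩ.finDim
      refine ⟨N, ?_⟩
      rintro n ⟨c, hc, hmem⟩
      obtain ⟨h1, h2⟩ := chain_lift hΩ V hc hmem
      exact hN n ⟨_, h1, h2⟩
    · -- conj_invariant
      intro A hA f Y hiso
      obtain ⟨G, H, hGiso, hH, hGeq, hGid, hHid, hHG, hGH, hAD, hYD⟩ :=
        star_iso_package hF hΩ hiso
      have hVleY : V ≤ star (V ⊔ Y) := le_sup_left.trans (le_star' hΩ _)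
      have hGA : G '' (A : Set S) = (Y : Set S) := by
        rw [Set.EqOn.image_eq hGeq, hiso.2]
      refine ⟨Y, hYD, le_antisymm ?_ ?_⟩
      · exact le_inf (le_sup_right.trans (le_star' hΩ _)) hYD
      · intro d hd
        have hd' : d ∈ star (V ⊔ Y) ∧ d ∈ D := Subgroup.mem_inf.mp hd
        have h1 : H d ∈ star (V ⊔ A) := hF.mapsTo _ _ _ hH hd'.1
        have h2 : H d ∈ D := maps_cent hF hH hHid hVleY hd'.1 hd'.2
        have h3 : H d ∈ A := by
          have e := circ_fix hΩ hA
          rw [← e]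
          exact Subgroup.mem_inf.mpr ⟨h1, h2⟩
        have h4 : d = G (H d) := (hGH d hd'.1).symm
        rw [h4, ← SetLike.mem_coe, ← hGA]
        exact ⟨H d, h3, rfl⟩
    · intro X hX
      exact le_inf (le_sup_right.trans (le_star' hΩ _)) hX
    · -- extend_star
      intro f X Y hiso
      obtain ⟨G, H, hGiso, hH, hGeq, hGid, hHid, hHG, hGH, hXD, hYD⟩ :=
        star_iso_package hF hΩ hiso
      have hVleX : V ≤ star (V ⊔ X) := le_sup_left.trans (le_star' hΩ _)
      have hVleY : V ≤ star (V ⊔ Y) := le_sup_left.trans (le_star' hΩ _)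
      show ∃ g, IsFIso (CFus F V) g (star (V ⊔ X) ⊓ D) (star (V ⊔ Y) ⊓ D) ∧
        Set.EqOn g f (X : Set S)
      set Xo := star (V ⊔ X) ⊓ D with hXo
      set Yo := star (V ⊔ Y) ⊓ D with hYo
      have hmapsXo : ∀ x ∈ Xo, G x ∈ Yo := fun x hx =>
        Subgroup.mem_inf.mpr ⟨hF.mapsTo _ _ _ hGiso.1 (Subgroup.mem_inf.mp hx).1,
          maps_cent hF hGiso.1 hGid hVleX (Subgroup.mem_inf.mp hx).1 (Subgroup.mem_inf.mp hx).2⟩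
      have hmapsYo : ∀ y ∈ Yo, H y ∈ Xo := fun y hy =>
        Subgroup.mem_inf.mpr ⟨hF.mapsTo _ _ _ hH (Subgroup.mem_inf.mp hy).1,
          maps_cent hF hH hHid hVleY (Subgroup.mem_inf.mp hy).1 (Subgroup.mem_inf.mp hy).2⟩
      have himX : G '' (Xo : Set S) = (Yo : Set S) := by
        refine Set.Subset.antisymm ?_ ?_
        · rintro y ⟨x, hx, rfl⟩; exact hmapsXo x hx
        · intro y hy
          exact ⟨H y, hmapsYo y hy, hGH y (Subgroup.mem_inf.mp hy).1⟩
      have hFXo : F G Xo Yo :=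
        hF.restrict_mem G _ _ Xo Yo hGiso.1 inf_le_left inf_le_left (fun x hx => hmapsXo x hx)
      have hXoV : Xo ⊔ V ≤ star (V ⊔ X) := sup_le inf_le_left hVleX
      have hsub : ∀ x ∈ Xo ⊔ V, G x ∈ Yo ⊔ V :=
        mapsTo_sup hF hGiso.1 inf_le_left hVleX
          (fun p hp => Subgroup.mem_sup_left (hmapsXo p hp))
          (fun v hv => by rw [hGid v hv]; exact Subgroup.mem_sup_right hv)
      obtain ⟨W, hW⟩ := exists_image hF hGiso.1 hXoV
      have hYoW : Yo ≤ W := fun y hy => by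
        rw [← SetLike.mem_coe, hW]
        exact ⟨H y, Subgroup.mem_sup_left (hmapsYo y hy), hGH y (Subgroup.mem_inf.mp hy).1⟩
      have hVW : V ≤ W := fun v hv => by
        rw [← SetLike.mem_coe, hW]
        exact ⟨v, Subgroup.mem_sup_right hv, hGid v hv⟩
      have himsup : G '' ((Xo ⊔ V : Subgroup S) : Set S) = ((Yo ⊔ V : Subgroup S) : Set S) := by
        refine Set.Subset.antisymm ?_ ?_
        · rintro y ⟨x, hx, rfl⟩; exact hsub x hx
        · rw [← hW]; exact SetLike.coe_subset_coe.mpr (sup_le hYoW hVW)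
      have hFsup : F G (Xo ⊔ V) (Yo ⊔ V) :=
        hF.restrict_mem G _ _ _ _ hGiso.1 hXoV (sup_le inf_le_left hVleY)
          (fun x hx => hsub x hx)
      have hpsi : CPsi F V G Xo Yo :=
        ⟨inf_le_right, inf_le_right, ⟨hFXo, himX⟩, G, ⟨hFsup, himsup⟩, fun x _ => rfl, hGid⟩
      exact ⟨G, ⟨fun E hE h1 h2 => h2 _ _ _ hpsi, himX⟩, hGeq⟩
  refine ⟨hstrat, ⟨fun A _ => hΩ.star_mem _ le_top,
    fun A _ B _ h => star_mono' hΩ (sup_le_sup_left h V), ?_⟩, ?_⟩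
  · -- injectivity
    intro A hA B hB h
    simp only at h
    calc A = circStar star V A := (circ_fix hΩ hA).symm
      _ = circStar star V B := by simp only [circStar, h]
      _ = B := circ_fix hΩ hB
  · -- part (c)
    intro hdim
    obtain ⟨N, hN⟩ := hΩ.finDim
    have hbddΩ : BddAbove {m : ℕ | ∃ c : Fin (m + 1) → Subgroup S,
        StrictMono c ∧ ∀ i, c i ∈ Ω} := ⟨N, fun m hm => hN m hm⟩
    have hsubset : ∀ m : ℕ, (∃ c : Fin (m + 1) → Subgroup S,
        StrictMono c ∧ ∀ i, c i ∈ circOmega star V) →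
        ∃ c : Fin (m + 1) → Subgroup S, StrictMono c ∧ ∀ i, c i ∈ Ω := by
      rintro m ⟨c, hc, hmem⟩
      obtain ⟨h1, h2⟩ := chain_lift hΩ V hc hmem
      exact ⟨_, h1, h2⟩
    have hbddC : BddAbove {m : ℕ | ∃ c : Fin (m + 1) → Subgroup S,
        StrictMono c ∧ ∀ i, c i ∈ circOmega star V} :=
      ⟨N, fun m hm => hN m (hsubset m hm)⟩
    have hne : {m : ℕ | ∃ c : Fin (m + 1) → Subgroup S,
        StrictMono c ∧ ∀ i, c i ∈ circOmega star V}.Nonempty := by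
      refine ⟨0, fun _ => circStar star V ⊥, ?_, fun _ => ⟨⊥, bot_le, rfl⟩⟩
      intro i j hij
      have h1 : (i : ℕ) < 1 := i.isLt
      have h2 : (j : ℕ) < 1 := j.isLt
      have h3 : (i : ℕ) < (j : ℕ) := hij
      omega
    have hnmem : dimOmega (circOmega star V) ∈ {m : ℕ | ∃ c : Fin (m + 1) → Subgroup S,
        StrictMono c ∧ ∀ i, c i ∈ circOmega star V} := Nat.sSup_mem hne hbddC
    set n := dimOmega (circOmega star V) with hn
    obtain ⟨c, hc, hmem⟩ := hnmem
    obtain ⟨hc', hmem'⟩ := chain_lift hΩ V hc hmem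
    have hmax : ∀ d : Fin (n + 2) → Subgroup S, StrictMono d → (∀ i, d i ∈ Ω) → False := by
      intro d hd hm
      have h1 : (n + 1) ∈ {m : ℕ | ∃ c : Fin (m + 1) → Subgroup S,
          StrictMono c ∧ ∀ i, c i ∈ Ω} := ⟨d, hd, hm⟩
      have h2 : n + 1 ≤ dimOmega Ω := le_csSup hbddΩ h1
      rw [← hdim] at h2
      omega
    have hVbot : V ≤ star ⊥ := by
      have hle : star ⊥ ≤ star (V ⊔ c 0) := star_mono' hΩ bot_le
      have heq0 : star ⊥ = star (V ⊔ c 0) := by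
        by_contra hne0
        have hlt : star ⊥ < star (V ⊔ c 0) := lt_of_le_of_ne hle hne0
        refine hmax (fun i => if h : (i : ℕ) = 0 then star ⊥
          else star (V ⊔ c ⟨(i : ℕ) - 1, by have := i.isLt; omega⟩)) ?_ ?_
        · intro i j hij
          have hij' : (i : ℕ) < (j : ℕ) := hij
          dsimp only
          by_cases hi : (i : ℕ) = 0
          · have hj : ¬ (j : ℕ) = 0 := by omega
            rw [dif_pos hi, dif_neg hj]
            exact lt_of_lt_of_le hlt (hc'.monotone (Fin.zero_le _))
          · have hj : ¬ (j : ℕ) = 0 := by omega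
            rw [dif_neg hi, dif_neg hj]
            exact hc' (Fin.mk_lt_mk.mpr (by omega))
        · intro i
          split
          · exact hΩ.star_mem ⊥ bot_le
          · exact hΩ.star_mem _ le_top
      calc V ≤ star (V ⊔ c 0) := le_sup_left.trans (le_star' hΩ _)
        _ = star ⊥ := heq0.symm
    constructor
    · exact inf_le_right.trans hVbot
    · have htop : (⊤ : Subgroup S) ∈ Ω := by
        have h : star ⊤ = ⊤ := le_antisymm le_top (le_star' hΩ ⊤)
        rw [← h]; exact hΩ.star_mem ⊤ le_top
      have hlast : star (V ⊔ c (Fin.last n)) = ⊤ := by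
        by_contra hne1
        have hlt : star (V ⊔ c (Fin.last n)) < ⊤ := lt_of_le_of_ne le_top hne1
        refine hmax (fun i => if h : (i : ℕ) ≤ n then star (V ⊔ c ⟨(i : ℕ), by omega⟩)
          else ⊤) ?_ ?_
        · intro i j hij
          have hij' : (i : ℕ) < (j : ℕ) := hij
          have hi2 : (i : ℕ) < n + 2 := i.isLt
          have hj2 : (j : ℕ) < n + 2 := j.isLt
          dsimp only
          by_cases hj : (j : ℕ) ≤ n
          · rw [dif_pos (by omega : (i : ℕ) ≤ n), dif_pos hj]
            exact hc' (Fin.mk_lt_mk.mpr hij')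
          · rw [dif_neg hj]
            by_cases hi : (i : ℕ) ≤ n
            · rw [dif_pos hi]
              refine lt_of_le_of_lt ?_ hlt
              exact hc'.monotone (Fin.le_last _)
            · exact absurd hij' (by omega)
        · intro i
          split
          · exact hΩ.star_mem _ le_top
          · exact htop
      have hclast : c (Fin.last n) ≤ D := circ_le_cent (hmem _)
      refine le_antisymm le_top ?_
      calc (⊤ : Subgroup S) = star (V ⊔ c (Fin.last n)) := hlast.symm
        _ ≤ star (V ⊔ D) := star_mono' hΩ (sup_le_sup_left hclast V)
end

section
/- Let (F,Ω,⋆) be a stratified fusion system on a group S, let Γ be an F-closed set of subgroups of S such that F is Γ-inductive, and let Y ∈ Γ. Then: (a) Y is normalizer-inductive in F if and only if Y is fully normalized in (F,Ω,⋆); (b) Y is centralizer-inductive in F if and only if Y is fully centralized in (F,Ω,⋆); (c) if Y is fully normalized in (F,Ω,⋆), then Y is fully centralized in (F,Ω,⋆). -/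
variable {S : Type*} [Group S]

namespace StratAux

variable {F : HomPred S}

lemma map_one (hF : IsFusionSystem ⊤ F) {f : S → S} {X Y : Subgroup S} (hf : F f X Y) :
    f 1 = 1 := by
  have h := hF.map_mul' f X Y hf 1 (one_mem X) 1 (one_mem X)
  rw [one_mul] at h
  exact mul_eq_left.mp h.symm

lemma map_inv (hF : IsFusionSystem ⊤ F) {f : S → S} {X Y : Subgroup S} (hf : F f X Y)
    {x : S} (hx : x ∈ X) : f x⁻¹ = (f x)⁻¹ := by
  have h := hF.map_mul' f X Y hf x⁻¹ (inv_mem hx) x hx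
  rw [inv_mul_cancel, map_one hF hf] at h
  exact eq_inv_of_mul_eq_one_left h.symm

lemma exists_image_subgroup (hF : IsFusionSystem ⊤ F) {f : S → S} {X Y : Subgroup S}
    (hf : F f X Y) :
    ∃ K : Subgroup S, (K : Set S) = f '' (X : Set S) ∧ IsFIso F f X K ∧ K ≤ Y := by
  let K : Subgroup S :=
  { carrier := f '' (X : Set S)
    mul_mem' := by
      rintro a b ⟨x, hx, rfl⟩ ⟨y, hy, rfl⟩
      exact ⟨x * y, mul_mem hx hy, hF.map_mul' f X Y hf x hx y hy⟩
    one_mem' := ⟨1, one_mem X, map_one hF hf⟩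
    inv_mem' := by
      rintro a ⟨x, hx, rfl⟩
      exact ⟨x⁻¹, inv_mem hx, map_inv hF hf hx⟩ }
  have hK : (K : Set S) = f '' (X : Set S) := rfl
  have hcl : Subgroup.closure (f '' (X : Set S)) = K := by
    rw [← hK, Subgroup.closure_eq]
  refine ⟨K, hK, ⟨?_, hK.symm⟩, ?_⟩
  · have h := hF.corestrict_mem f X Y hf
    rwa [hcl] at h
  · rintro a ha
    obtain ⟨x, hx, rfl⟩ := (hK ▸ ha : a ∈ f '' (X : Set S))
    exact hF.mapsTo f X Y hf hx

lemma isFIso_symm (hF : IsFusionSystem ⊤ F) {f : S → S} {X Y : Subgroup S}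
    (hf : IsFIso F f X Y) : ∃ g, IsFIso F g Y X ∧ ∀ x ∈ X, g (f x) = x := by
  obtain ⟨g, hg, hgf⟩ := hF.inv_mem f X Y hf.1
  have hcl : Subgroup.closure (f '' (X : Set S)) = Y := by
    rw [hf.2, Subgroup.closure_eq]
  rw [hcl] at hg
  refine ⟨g, ⟨hg, ?_⟩, hgf⟩
  ext a
  constructor
  · rintro ⟨y, hy, rfl⟩
    obtain ⟨x, hx, rfl⟩ := (hf.2 ▸ hy : y ∈ f '' (X : Set S))
    rw [hgf x hx]; exact hx
  · intro ha
    exact ⟨f a, hf.2 ▸ ⟨a, ha, rfl⟩, hgf a ha⟩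

lemma isFIso_trans (hF : IsFusionSystem ⊤ F) {f g : S → S} {X Y Z : Subgroup S}
    (hf : IsFIso F f X Y) (hg : IsFIso F g Y Z) : IsFIso F (g ∘ f) X Z :=
  ⟨hF.comp_mem f g X Y Z hf.1 hg.1, by rw [Set.image_comp, hf.2, hg.2]⟩

lemma fconj_symm (hF : IsFusionSystem ⊤ F) {X Y : Subgroup S} (h : Y ∈ FConj F X) :
    X ∈ FConj F Y := by
  obtain ⟨f, hf⟩ := h
  obtain ⟨g, hg, -⟩ := isFIso_symm hF hf
  exact ⟨g, hg⟩

lemma fconj_trans (hF : IsFusionSystem ⊤ F) {X Y Z : Subgroup S}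
    (hXY : Y ∈ FConj F X) (hYZ : Z ∈ FConj F Y) : Z ∈ FConj F X := by
  obtain ⟨f, hf⟩ := hXY
  obtain ⟨g, hg⟩ := hYZ
  exact ⟨g ∘ f, isFIso_trans hF hf hg⟩

lemma hom_restrict (hF : IsFusionSystem ⊤ F) {f : S → S} {X Y : Subgroup S} (hf : F f X Y)
    {C : Subgroup S} (hC : C ≤ X) : F f C Y :=
  hF.restrict_mem f X Y C Y hf hC le_rfl (fun a ha => hF.mapsTo f X Y hf (hC ha))

lemma centralizer_le_normalizer' (H : Subgroup S) :
    Subgroup.centralizer (H : Set S) ≤ (Subgroup.normalizer (H : Set S)) := by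
  intro c hc
  rw [Subgroup.mem_normalizer_iff]
  intro x
  constructor
  · intro hx
    have h1 : x * c = c * x := Subgroup.mem_centralizer_iff.mp hc x hx
    have : c * x * c⁻¹ = x := by rw [← h1]; group
    rwa [this]
  · intro hx
    have h1 : (c * x * c⁻¹) * c = c * (c * x * c⁻¹) :=
      Subgroup.mem_centralizer_iff.mp hc _ hx
    have h2 : x = c⁻¹ * (c * x * c⁻¹) * c := by group
    have h3 : c⁻¹ * (c * x * c⁻¹) * c = c * x * c⁻¹ := by
      rw [mul_assoc, h1]; group
    rw [h2, h3]; exact hx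

end StratAux

namespace StratAux2

open StratAux

variable {F : HomPred S} {Ω : Set (Subgroup S)} {star : Subgroup S → Subgroup S}

lemma bddAbove_end (hΩ : IsStratification ⊤ F Ω star) (A : Subgroup S) :
    BddAbove {n | ∃ c : Fin (n + 1) → Subgroup S,
      StrictMono c ∧ (∀ i, c i ∈ Ω) ∧ c (Fin.last n) = A} := by
  obtain ⟨N, hN⟩ := hΩ.finDim
  exact ⟨N, fun n hn => hN n ⟨hn.choose, hn.choose_spec.1, hn.choose_spec.2.1⟩⟩

lemma end_zero_mem {A : Subgroup S} (hA : A ∈ Ω) :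
    0 ∈ {n | ∃ c : Fin (n + 1) → Subgroup S,
      StrictMono c ∧ (∀ i, c i ∈ Ω) ∧ c (Fin.last n) = A} :=
  ⟨fun _ => A, fun i j h => absurd (Fin.lt_def.mp h)
      (by have := i.isLt; have := j.isLt; omega),
    fun _ => hA, rfl⟩

lemma dimEnd_mem (hΩ : IsStratification ⊤ F Ω star) {A : Subgroup S} (hA : A ∈ Ω) :
    ∃ c : Fin (dimEnd Ω A + 1) → Subgroup S,
      StrictMono c ∧ (∀ i, c i ∈ Ω) ∧ c (Fin.last _) = A :=
  Nat.sSup_mem ⟨0, end_zero_mem hA⟩ (bddAbove_end hΩ A)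

lemma dimEnd_lt_of_lt (hΩ : IsStratification ⊤ F Ω star) {A B : Subgroup S}
    (hA : A ∈ Ω) (hB : B ∈ Ω) (hAB : A < B) : dimEnd Ω A < dimEnd Ω B := by
  obtain ⟨c, hc, hcΩ, hclast⟩ := dimEnd_mem hΩ hA
  have hmem : dimEnd Ω A + 1 ∈ {m | ∃ d : Fin (m + 1) → Subgroup S,
      StrictMono d ∧ (∀ i, d i ∈ Ω) ∧ d (Fin.last m) = B} := by
    refine ⟨fun i => if h : (i : ℕ) < dimEnd Ω A + 1 then c ⟨i, h⟩ else B, ?_, ?_, ?_⟩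
    · intro i j hij
      rw [Fin.lt_def] at hij
      by_cases hj : (j : ℕ) < dimEnd Ω A + 1
      · have hi : (i : ℕ) < dimEnd Ω A + 1 := lt_trans hij hj
        simp only [dif_pos hi, dif_pos hj]
        exact hc (show (⟨i, hi⟩ : Fin (dimEnd Ω A + 1)) < ⟨j, hj⟩ from hij)
      · have hi : (i : ℕ) < dimEnd Ω A + 1 := by
          have := j.isLt; omega
        simp only [dif_pos hi, dif_neg hj]
        calc c ⟨i, hi⟩ ≤ c (Fin.last (dimEnd Ω A)) := hc.monotone (by
              rw [Fin.le_def]; exact Nat.lt_succ_iff.mp hi)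
          _ = A := hclast
          _ < B := hAB
    · intro i
      by_cases h : (i : ℕ) < dimEnd Ω A + 1
      · simp only [dif_pos h]; exact hcΩ _
      · simp only [dif_neg h]; exact hB
    · have : ¬ ((Fin.last (dimEnd Ω A + 1)) : ℕ) < dimEnd Ω A + 1 := by
        simp [Fin.last]
      simp only [dif_neg this]
  exact Nat.lt_of_lt_of_le (Nat.lt_succ_self _) (le_csSup (bddAbove_end hΩ B) hmem)

lemma dimEnd_le_of_le (hΩ : IsStratification ⊤ F Ω star) {A B : Subgroup S}
    (hA : A ∈ Ω) (hB : B ∈ Ω) (hAB : A ≤ B) : dimEnd Ω A ≤ dimEnd Ω B := by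
  rcases eq_or_lt_of_le hAB with rfl | h
  · exact le_rfl
  · exact (dimEnd_lt_of_lt hΩ hA hB h).le

lemma eq_of_dimEnd_le (hΩ : IsStratification ⊤ F Ω star) {A B : Subgroup S}
    (hA : A ∈ Ω) (hB : B ∈ Ω) (hAB : A ≤ B) (hd : dimEnd Ω B ≤ dimEnd Ω A) : A = B := by
  by_contra hne
  exact absurd hd (not_le.mpr (dimEnd_lt_of_lt hΩ hA hB (lt_of_le_of_ne hAB hne)))

lemma dimEnd_le_of_iso (hF : IsFusionSystem ⊤ F) (hΩ : IsStratification ⊤ F Ω star)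
    {f : S → S} {A B : Subgroup S} (hf : IsFIso F f A B) (hA : A ∈ Ω) :
    dimEnd Ω A ≤ dimEnd Ω B := by
  obtain ⟨c, hc, hcΩ, hclast⟩ := dimEnd_mem hΩ hA
  have hsub : ∀ i, c i ≤ A := fun i => hclast ▸ hc.monotone (Fin.le_last i)
  have hres : ∀ i, ∃ K : Subgroup S, (K : Set S) = f '' (c i : Set S) ∧
      IsFIso F f (c i) K ∧ K ≤ B :=
    fun i => exists_image_subgroup hF (hom_restrict hF hf.1 (hsub i))
  choose K hKset hKiso hKle using hres
  have hmem : dimEnd Ω A ∈ {m | ∃ d : Fin (m + 1) → Subgroup S,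
      StrictMono d ∧ (∀ i, d i ∈ Ω) ∧ d (Fin.last m) = B} := by
    refine ⟨K, ?_, ?_, ?_⟩
    · intro i j hij
      have hlt := hc hij
      refine lt_of_le_of_ne ?_ ?_
      · rw [← SetLike.coe_subset_coe, hKset i, hKset j]
        exact Set.image_mono (SetLike.coe_subset_coe.mpr hlt.le)
      · intro heq
        obtain ⟨x, hxj, hxi⟩ := SetLike.exists_of_lt hlt
        have hfx : f x ∈ (K i : Set S) := by
          rw [heq, hKset j]; exact ⟨x, hxj, rfl⟩
        rw [hKset i] at hfx
        obtain ⟨x', hx', hfeq⟩ := hfx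
        have := hF.injOn f A B hf.1 (hsub i hx') (hsub j hxj) hfeq
        exact hxi (this ▸ hx')
    · intro i
      exact hΩ.conj_invariant (c i) (hcΩ i) f (K i) (hKiso i)
    · apply SetLike.coe_injective
      rw [hKset, hclast, hf.2]
  exact le_csSup (bddAbove_end hΩ B) hmem

lemma dimStar_eq_of_iso (hF : IsFusionSystem ⊤ F) (hΩ : IsStratification ⊤ F Ω star)
    {f : S → S} {X Y : Subgroup S} (hf : IsFIso F f X Y) :
    dimStar Ω star X = dimStar Ω star Y := by
  obtain ⟨g, hg, -⟩ := hΩ.extend_star f X Y hf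
  obtain ⟨g', hg', -⟩ := isFIso_symm hF hg
  exact le_antisymm (dimEnd_le_of_iso hF hΩ hg (hΩ.star_mem X le_top))
    (dimEnd_le_of_iso hF hΩ hg' (hΩ.star_mem Y le_top))

lemma dimStar_mono (hΩ : IsStratification ⊤ F Ω star) {X Y : Subgroup S} (hXY : X ≤ Y) :
    dimStar Ω star X ≤ dimStar Ω star Y :=
  dimEnd_le_of_le hΩ (hΩ.star_mem X le_top) (hΩ.star_mem Y le_top)
    (hΩ.star_mono X Y le_top le_top hXY)

lemma dimStar_le_of_hom (hF : IsFusionSystem ⊤ F) (hΩ : IsStratification ⊤ F Ω star)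
    {f : S → S} {X Y : Subgroup S} (hf : F f X Y) :
    dimStar Ω star X ≤ dimStar Ω star Y := by
  obtain ⟨K, -, hiso, hKY⟩ := exists_image_subgroup hF hf
  exact (dimStar_eq_of_iso hF hΩ hiso).le.trans (dimStar_mono hΩ hKY)

end StratAux2

namespace StratAux3

open StratAux StratAux2

variable {F : HomPred S} {Ω : Set (Subgroup S)} {star : Subgroup S → Subgroup S}

lemma image_inv_eq {h ψ : S → S} {Y : Subgroup S} {Zs : Set S}
    (himg : ψ '' (Y : Set S) = Zs) (hinv : ∀ p ∈ Y, h (ψ p) = p) :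
    h '' Zs = (Y : Set S) := by
  rw [← himg, ← Set.image_comp]
  ext a
  constructor
  · rintro ⟨y, hy, rfl⟩
    simpa [Function.comp, hinv y hy] using hy
  · intro ha
    exact ⟨a, ha, hinv a ha⟩

/-- Core inversion lemma: an `F`-homomorphism `ψ : P → Q` with
`dim Q ≤ dim P` admits a left-inverse `F`-homomorphism `Q → P⋆`. -/
lemma core (hF : IsFusionSystem ⊤ F) (hΩ : IsStratification ⊤ F Ω star)
    {ψ : S → S} {P Q : Subgroup S} (hψ : F ψ P Q)
    (hdim : dimStar Ω star Q ≤ dimStar Ω star P) :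
    ∃ h, F h Q (star P) ∧ (∀ p ∈ P, h (ψ p) = p) := by
  obtain ⟨A, hAset, hAiso, hAQ⟩ := exists_image_subgroup hF hψ
  have h1 : star A ≤ star Q := hΩ.star_mono A Q le_top le_top hAQ
  have h2 : dimEnd Ω (star A) = dimEnd Ω (star Q) := by
    have e1 : dimStar Ω star P = dimStar Ω star A := dimStar_eq_of_iso hF hΩ hAiso
    have e2 : dimStar Ω star A ≤ dimStar Ω star Q := dimStar_mono hΩ hAQ
    exact le_antisymm e2 (hdim.trans e1.le)
  have hstar : star A = star Q :=
    eq_of_dimEnd_le hΩ (hΩ.star_mem A le_top) (hΩ.star_mem Q le_top) h1 h2.ge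
  obtain ⟨g, hgiso, hgeq⟩ := hΩ.extend_star ψ P A hAiso
  obtain ⟨h, hhiso, hhg⟩ := isFIso_symm hF hgiso
  rw [hstar] at hhiso
  refine ⟨h, ?_, ?_⟩
  · exact hF.restrict_mem h (star Q) (star P) Q (star P) hhiso.1 (hΩ.le_star Q le_top)
      le_rfl (fun a ha => hF.mapsTo _ _ _ hhiso.1 (hΩ.le_star Q le_top ha))
  · intro p hp
    rw [← hgeq hp]
    exact hhg p (hΩ.le_star P le_top hp)

/-- (a⇒): normalizer-inductive implies fully normalized. -/
lemma aux1 (hF : IsFusionSystem ⊤ F) (hΩ : IsStratification ⊤ F Ω star)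
    {Y : Subgroup S} (hni : NormalizerInductive ⊤ F Y) :
    FullyNormalizedIn ⊤ F Ω star Y := by
  intro U hU
  obtain ⟨φ, hφ, -⟩ := hni U hU
  exact dimStar_le_of_hom hF hΩ hφ

/-- (b⇒): centralizer-inductive implies fully centralized. -/
lemma aux3 (hF : IsFusionSystem ⊤ F) (hΩ : IsStratification ⊤ F Ω star)
    {Y : Subgroup S} (hci : CentralizerInductive ⊤ F Y) :
    FullyCentralizedIn ⊤ F Ω star Y := by
  intro U hU
  obtain ⟨ψ, hψ, -⟩ := hci U hU
  exact dimStar_le_of_hom hF hΩ hψ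

/-- normalizer-inductive implies centralizer-inductive. -/
lemma aux2 (hF : IsFusionSystem ⊤ F) {Y : Subgroup S}
    (hni : NormalizerInductive ⊤ F Y) : CentralizerInductive ⊤ F Y := by
  intro X hX
  obtain ⟨φ, hφ, hφimg⟩ := hni X hX
  simp only [inf_top_eq] at hφ ⊢
  -- the subgroup of elements of N(X) mapped into C(Y) ⊔ Y
  set PY : Subgroup S := Subgroup.centralizer (Y : Set S) ⊔ Y with hPY
  let K : Subgroup S :=
  { carrier := {s | s ∈ (Subgroup.normalizer (X : Set S)) ∧ φ s ∈ PY}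
    one_mem' := ⟨one_mem _, by rw [map_one hF hφ]; exact one_mem _⟩
    mul_mem' := by
      rintro a b ⟨ha, ha'⟩ ⟨hb, hb'⟩
      exact ⟨mul_mem ha hb, by
        rw [hF.map_mul' φ (Subgroup.normalizer (X : Set S)) (Subgroup.normalizer (Y : Set S)) hφ a ha b hb]
        exact mul_mem ha' hb'⟩
    inv_mem' := by
      rintro a ⟨ha, ha'⟩
      exact ⟨inv_mem ha, by rw [map_inv hF hφ ha]; exact inv_mem ha'⟩ }
  have hXle : X ≤ (Subgroup.normalizer (X : Set S)) := Subgroup.le_normalizer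
  have hCK : Subgroup.centralizer (X : Set S) ≤ K := by
    intro c hc
    refine ⟨centralizer_le_normalizer' X hc, ?_⟩
    have hcY : φ c ∈ Subgroup.centralizer (Y : Set S) := by
      rw [Subgroup.mem_centralizer_iff]
      intro y hy
      obtain ⟨x, hx, rfl⟩ := (hφimg ▸ hy : y ∈ φ '' (X : Set S))
      have hcx : x * c = c * x := Subgroup.mem_centralizer_iff.mp hc x hx
      rw [← hF.map_mul' φ (Subgroup.normalizer (X : Set S)) (Subgroup.normalizer (Y : Set S)) hφ x (hXle hx) c
        (centralizer_le_normalizer' X hc), hcx,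
        hF.map_mul' φ (Subgroup.normalizer (X : Set S)) (Subgroup.normalizer (Y : Set S)) hφ c
        (centralizer_le_normalizer' X hc) x (hXle hx)]
    exact le_sup_left (a := Subgroup.centralizer (Y : Set S)) hcY
  have hXK : X ≤ K := by
    intro x hx
    have hmem : φ x ∈ (Y : Set S) := hφimg ▸ ⟨x, hx, rfl⟩
    exact ⟨hXle hx, le_sup_right (a := Subgroup.centralizer (Y : Set S)) hmem⟩
  have hsup : Subgroup.centralizer (X : Set S) ⊔ X ≤ K := sup_le hCK hXK
  have hsupN : Subgroup.centralizer (X : Set S) ⊔ X ≤ (Subgroup.normalizer (X : Set S)) :=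
    sup_le (centralizer_le_normalizer' X) hXle
  have hPYN : PY ≤ (Subgroup.normalizer (Y : Set S)) := sup_le (centralizer_le_normalizer' Y)
    Subgroup.le_normalizer
  refine ⟨φ, hF.restrict_mem φ (Subgroup.normalizer (X : Set S)) (Subgroup.normalizer (Y : Set S)) _ PY hφ hsupN hPYN
    (fun a ha => (hsup ha).2), hφimg⟩

end StratAux3

namespace StratAux4

open StratAux StratAux2 StratAux3

variable {F : HomPred S} {Ω : Set (Subgroup S)} {star : Subgroup S → Subgroup S}

/-- (a⇐): fully normalized implies normalizer-inductive (given Γ-inductivity). -/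
lemma aux4 (hF : IsFusionSystem ⊤ F) (hΩ : IsStratification ⊤ F Ω star)
    {Γ : Set (Subgroup S)} (hind : GammaInductive ⊤ F Γ) {Y : Subgroup S} (hY : Y ∈ Γ)
    (hfn : FullyNormalizedIn ⊤ F Ω star Y) : NormalizerInductive ⊤ F Y := by
  obtain ⟨Z, hZconj, hZni⟩ := hind Y hY
  have hYZ : Y ∈ FConj F Z := fconj_symm hF hZconj
  obtain ⟨ψ, hψ, hψimg⟩ := hZni Y hYZ
  simp only [inf_top_eq] at hψ
  have hdim : dimStar Ω star (Subgroup.normalizer (Z : Set S)) ≤ dimStar Ω star (Subgroup.normalizer (Y : Set S)) := by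
    have h := hfn Z hZconj
    simpa only [inf_top_eq] using h
  obtain ⟨h, hh, hinv⟩ := core hF hΩ hψ hdim
  have hYle : Y ≤ (Subgroup.normalizer (Y : Set S)) := Subgroup.le_normalizer
  have hZle : Z ≤ (Subgroup.normalizer (Z : Set S)) := Subgroup.le_normalizer
  have hhZ : h '' (Z : Set S) = (Y : Set S) :=
    image_inv_eq hψimg (fun p hp => hinv p (hYle hp))
  -- h maps N(Z) into N(Y)
  have hmt : Set.MapsTo h ((Subgroup.normalizer (Z : Set S)) : Set S) ((Subgroup.normalizer (Y : Set S)) : Set S) := by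
    intro n hn
    have hn' : n ∈ (Subgroup.normalizer (Z : Set S)) := hn
    rw [SetLike.mem_coe, Subgroup.mem_normalizer_iff]
    intro y
    constructor
    · intro hy
      obtain ⟨z, hz, rfl⟩ := (hhZ ▸ (hy : y ∈ (Y : Set S)) : y ∈ h '' (Z : Set S))
      have hzn : n * z * n⁻¹ ∈ Z := (Subgroup.mem_normalizer_iff.mp hn' z).mp hz
      have hcalc : h n * h z * (h n)⁻¹ = h (n * z * n⁻¹) := by
        rw [hF.map_mul' h (Subgroup.normalizer (Z : Set S)) (star (Subgroup.normalizer (Y : Set S))) hh (n * z)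
            (mul_mem hn' (hZle hz)) n⁻¹ (inv_mem hn'),
          hF.map_mul' h (Subgroup.normalizer (Z : Set S)) (star (Subgroup.normalizer (Y : Set S))) hh n hn' z (hZle hz),
          map_inv hF hh hn']
      rw [hcalc]
      have hm : h (n * z * n⁻¹) ∈ h '' (Z : Set S) := ⟨n * z * n⁻¹, hzn, rfl⟩
      rw [hhZ] at hm
      exact hm
    · intro hy
      obtain ⟨z, hz, hzeq⟩ := (hhZ ▸ (hy : h n * y * (h n)⁻¹ ∈ (Y : Set S)) :
        h n * y * (h n)⁻¹ ∈ h '' (Z : Set S))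
      have hyeq : y = (h n)⁻¹ * h z * h n := by
        rw [hzeq]; group
      have hzn : n⁻¹ * z * n ∈ Z := by
        have := (Subgroup.mem_normalizer_iff.mp (inv_mem hn') z).mp hz
        simpa using this
      have hcalc : h (n⁻¹ * z * n) = (h n)⁻¹ * h z * h n := by
        rw [hF.map_mul' h (Subgroup.normalizer (Z : Set S)) (star (Subgroup.normalizer (Y : Set S))) hh (n⁻¹ * z)
            (mul_mem (inv_mem hn') (hZle hz)) n hn',
          hF.map_mul' h (Subgroup.normalizer (Z : Set S)) (star (Subgroup.normalizer (Y : Set S))) hh n⁻¹ (inv_mem hn') z (hZle hz),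
          map_inv hF hh hn']
      have hm : y ∈ h '' (Z : Set S) := ⟨n⁻¹ * z * n, hzn, by rw [hcalc, ← hyeq]⟩
      rw [hhZ] at hm
      exact hm
  have hhom : F h (Subgroup.normalizer (Z : Set S)) (Subgroup.normalizer (Y : Set S)) :=
    hF.restrict_mem h (Subgroup.normalizer (Z : Set S)) (star (Subgroup.normalizer (Y : Set S))) (Subgroup.normalizer (Z : Set S)) (Subgroup.normalizer (Y : Set S)) hh
      le_rfl (hΩ.le_star (Subgroup.normalizer (Y : Set S)) le_top) hmt
  intro X hX
  have hXZ : X ∈ FConj F Z := fconj_trans hF hYZ hX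
  obtain ⟨φ, hφ, hφimg⟩ := hZni X hXZ
  simp only [inf_top_eq] at hφ ⊢
  exact ⟨h ∘ φ, hF.comp_mem φ h (Subgroup.normalizer (X : Set S)) (Subgroup.normalizer (Z : Set S)) (Subgroup.normalizer (Y : Set S)) hφ hhom,
    by rw [Set.image_comp, hφimg, hhZ]⟩

/-- (b⇐): fully centralized implies centralizer-inductive (given Γ-inductivity). -/
lemma aux5 (hF : IsFusionSystem ⊤ F) (hΩ : IsStratification ⊤ F Ω star)
    {Γ : Set (Subgroup S)} (hind : GammaInductive ⊤ F Γ) {Y : Subgroup S} (hY : Y ∈ Γ)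
    (hfc : FullyCentralizedIn ⊤ F Ω star Y) : CentralizerInductive ⊤ F Y := by
  obtain ⟨Z, hZconj, hZni⟩ := hind Y hY
  have hZci : CentralizerInductive ⊤ F Z := aux2 hF hZni
  have hYZ : Y ∈ FConj F Z := fconj_symm hF hZconj
  obtain ⟨ψ, hψ, hψimg⟩ := hZci Y hYZ
  simp only [inf_top_eq] at hψ
  set PY : Subgroup S := Subgroup.centralizer (Y : Set S) ⊔ Y with hPYdef
  set QZ : Subgroup S := Subgroup.centralizer (Z : Set S) ⊔ Z with hQZdef
  have hdim : dimStar Ω star QZ ≤ dimStar Ω star PY := by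
    have h := hfc Z hZconj
    simpa only [inf_top_eq] using h
  obtain ⟨h, hh, hinv⟩ := core hF hΩ hψ hdim
  have hYle : Y ≤ PY := le_sup_right
  have hZle : Z ≤ QZ := le_sup_right
  have hCZle : Subgroup.centralizer (Z : Set S) ≤ QZ := le_sup_left
  have hhZ : h '' (Z : Set S) = (Y : Set S) :=
    image_inv_eq hψimg (fun p hp => hinv p (hYle hp))
  -- the subgroup of elements of QZ mapped into PY
  let K : Subgroup S :=
  { carrier := {s | s ∈ QZ ∧ h s ∈ PY}
    one_mem' := ⟨one_mem _, by rw [map_one hF hh]; exact one_mem _⟩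
    mul_mem' := by
      rintro a b ⟨ha, ha'⟩ ⟨hb, hb'⟩
      exact ⟨mul_mem ha hb, by
        rw [hF.map_mul' h QZ (star PY) hh a ha b hb]; exact mul_mem ha' hb'⟩
    inv_mem' := by
      rintro a ⟨ha, ha'⟩
      exact ⟨inv_mem ha, by rw [map_inv hF hh ha]; exact inv_mem ha'⟩ }
  have hCK : Subgroup.centralizer (Z : Set S) ≤ K := by
    intro c hc
    refine ⟨hCZle hc, ?_⟩
    have hcY : h c ∈ Subgroup.centralizer (Y : Set S) := by
      rw [Subgroup.mem_centralizer_iff]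
      intro y hy
      obtain ⟨z, hz, rfl⟩ := (hhZ ▸ (hy : y ∈ (Y : Set S)) : y ∈ h '' (Z : Set S))
      have hcz : z * c = c * z := Subgroup.mem_centralizer_iff.mp hc z hz
      rw [← hF.map_mul' h QZ (star PY) hh z (hZle hz) c (hCZle hc), hcz,
        hF.map_mul' h QZ (star PY) hh c (hCZle hc) z (hZle hz)]
    exact le_sup_left (a := Subgroup.centralizer (Y : Set S)) hcY
  have hZK : Z ≤ K := by
    intro z hz
    have hmem : h z ∈ (Y : Set S) := hhZ ▸ ⟨z, hz, rfl⟩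
    exact ⟨hZle hz, hYle hmem⟩
  have hsup : QZ ≤ K := sup_le hCK hZK
  have hhom : F h QZ PY :=
    hF.restrict_mem h QZ (star PY) QZ PY hh le_rfl (hΩ.le_star PY le_top)
      (fun a ha => (hsup ha).2)
  intro X hX
  have hXZ : X ∈ FConj F Z := fconj_trans hF hYZ hX
  obtain ⟨φ, hφ, hφimg⟩ := hZci X hXZ
  simp only [inf_top_eq] at hφ ⊢
  exact ⟨h ∘ φ, hF.comp_mem φ h _ QZ PY hφ hhom,
    by rw [Set.image_comp, hφimg, hhZ]⟩

end StratAux4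


/-- Lemma 2.9. For `Y ∈ Γ` with `Γ` `F`-closed and `F` `Γ`-inductive:
(a) `Y` is normalizer-inductive iff `Y` is fully normalized;
(b) `Y` is centralizer-inductive iff `Y` is fully centralized;
(c) fully normalized implies fully centralized. -/
theorem normalizerInductive_iff_fullyNormalized
    {S : Type*} [Group S] (F : HomPred S)
    (Ω : Set (Subgroup S)) (star : Subgroup S → Subgroup S)
    (hF : IsFusionSystem ⊤ F) (hΩ : IsStratification ⊤ F Ω star)
    (Γ : Set (Subgroup S)) (hΓ : FClosed F Γ) (hind : GammaInductive ⊤ F Γ)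
    (Y : Subgroup S) (hY : Y ∈ Γ) :
    (NormalizerInductive ⊤ F Y ↔ FullyNormalizedIn ⊤ F Ω star Y) ∧
    (CentralizerInductive ⊤ F Y ↔ FullyCentralizedIn ⊤ F Ω star Y) ∧
    (FullyNormalizedIn ⊤ F Ω star Y → FullyCentralizedIn ⊤ F Ω star Y) := by
  refine ⟨⟨StratAux3.aux1 hF hΩ, StratAux4.aux4 hF hΩ hind hY⟩,
    ⟨StratAux3.aux3 hF hΩ, StratAux4.aux5 hF hΩ hind hY⟩,
    fun h => StratAux3.aux3 hF hΩ
      (StratAux3.aux2 hF (StratAux4.aux4 hF hΩ hind hY h))⟩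
end

section
/- Let (F,Ω,⋆) be a stratified fusion system on a group S, let Γ be an F-closed set of subgroups of S such that F is Γ-inductive, let T ≤ S be strongly closed in F, let Q ≤ S, and set V = Q ∩ T (note that V is normal in Q, so Q ≤ N_S(V)). Assume that V ∈ Γ, that V is fully normalized in (F,Ω,⋆), and that Q is fully normalized in N_F(V). Then Q is fully normalized in (F,Ω,⋆). -/
variable {S : Type*} [Group S]

namespace StratProof

open Set Subgroup

variable {S : Type*} [Group S]

/-- image subgroup of `X` under `f` -/
def imSub (f : S → S) (X : Subgroup S) : Subgroup S :=
  Subgroup.closure (f '' (X : Set S))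

section Basic

variable {T₀ : Subgroup S} {F₀ : HomPred S}

theorem fmap_mul (hFS : IsFusionSystem T₀ F₀) {f : S → S} {X Y : Subgroup S} (h : F₀ f X Y)
    {x y : S} (hx : x ∈ X) (hy : y ∈ X) : f (x * y) = f x * f y :=
  hFS.map_mul' f X Y h x hx y hy

theorem fmap_one (hFS : IsFusionSystem T₀ F₀) {f : S → S} {X Y : Subgroup S}
    (h : F₀ f X Y) : f 1 = 1 := by
  have h1 : f (1 * 1) = f 1 * f 1 := fmap_mul hFS h (one_mem X) (one_mem X)
  rw [one_mul] at h1
  have h2 : f 1 * 1 = f 1 * f 1 := by rw [mul_one]; exact h1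
  exact (mul_left_cancel h2).symm

theorem fmap_inv (hFS : IsFusionSystem T₀ F₀) {f : S → S} {X Y : Subgroup S} (h : F₀ f X Y)
    {x : S} (hx : x ∈ X) : f x⁻¹ = (f x)⁻¹ := by
  have h1 : f x⁻¹ * f x = 1 := by
    rw [← fmap_mul hFS h (inv_mem hx) hx, inv_mul_cancel, fmap_one hFS h]
  exact eq_inv_of_mul_eq_one_left h1

theorem imSub_coe (hFS : IsFusionSystem T₀ F₀) {f : S → S} {X Y : Subgroup S} (h : F₀ f X Y) :
    (imSub f X : Set S) = f '' (X : Set S) := by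
  let K : Subgroup S :=
    { carrier := f '' (X : Set S)
      one_mem' := ⟨1, one_mem X, fmap_one hFS h⟩
      mul_mem' := by
        rintro a b ⟨x, hx, rfl⟩ ⟨y, hy, rfl⟩
        exact ⟨x * y, mul_mem hx hy, fmap_mul hFS h hx hy⟩
      inv_mem' := by
        rintro a ⟨x, hx, rfl⟩
        exact ⟨x⁻¹, inv_mem hx, fmap_inv hFS h hx⟩ }
  have h2 : imSub f X = K := by
    unfold imSub
    rw [show f '' (X : Set S) = (K : Set S) from rfl, Subgroup.closure_eq]
  rw [h2]; rfl

theorem imSub_le (hFS : IsFusionSystem T₀ F₀) {f : S → S} {X Y : Subgroup S} (h : F₀ f X Y) :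
    imSub f X ≤ Y :=
  (Subgroup.closure_le Y).mpr (hFS.mapsTo f X Y h).image_subset

theorem hom_corestrict (hFS : IsFusionSystem T₀ F₀) {f : S → S} {X Y : Subgroup S}
    (h : F₀ f X Y) : F₀ f X (imSub f X) :=
  hFS.corestrict_mem f X Y h

theorem hom_restrict (hFS : IsFusionSystem T₀ F₀) {f : S → S} {X Y : Subgroup S}
    (h : F₀ f X Y) {X₀ : Subgroup S} (hX₀ : X₀ ≤ X) : F₀ f X₀ (imSub f X₀) := by
  have h1 : F₀ f X₀ Y :=
    hFS.restrict_mem f X Y X₀ Y h hX₀ le_rfl ((hFS.mapsTo f X Y h).mono_left hX₀)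
  exact hom_corestrict hFS h1

theorem isoOnto (hFS : IsFusionSystem T₀ F₀) {f : S → S} {X Y : Subgroup S} (h : F₀ f X Y) :
    IsFIso F₀ f X (imSub f X) :=
  ⟨hom_corestrict hFS h, (imSub_coe hFS h).symm⟩

theorem iso_restrict (hFS : IsFusionSystem T₀ F₀) {f : S → S} {X Y : Subgroup S}
    (h : F₀ f X Y) {X₀ : Subgroup S} (hX₀ : X₀ ≤ X) : IsFIso F₀ f X₀ (imSub f X₀) :=
  isoOnto hFS (hFS.restrict_mem f X Y X₀ Y h hX₀ le_rfl ((hFS.mapsTo f X Y h).mono_left hX₀))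

theorem imSub_eq_of_iso (hFS : IsFusionSystem T₀ F₀) {f : S → S} {X Y : Subgroup S}
    (h : IsFIso F₀ f X Y) : imSub f X = Y :=
  SetLike.coe_injective (by rw [imSub_coe hFS h.1, h.2])

theorem iso_inv (hFS : IsFusionSystem T₀ F₀) {f : S → S} {X Y : Subgroup S}
    (h : IsFIso F₀ f X Y) :
    ∃ g, IsFIso F₀ g Y X ∧ (∀ x ∈ X, g (f x) = x) ∧ ∀ y ∈ Y, f (g y) = y := by
  obtain ⟨g, hg, hgf⟩ := hFS.inv_mem f X Y h.1
  have hcl : Subgroup.closure (f '' (X : Set S)) = Y := by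
    rw [h.2, Subgroup.closure_eq]
  rw [hcl] at hg
  have himg : g '' (Y : Set S) = (X : Set S) := by
    apply Set.Subset.antisymm
    · rintro _ ⟨y, hy, rfl⟩
      have hy' : y ∈ f '' (X : Set S) := h.2.symm ▸ hy
      obtain ⟨x, hx, rfl⟩ := hy'
      rw [hgf x hx]; exact hx
    · intro x hx
      refine ⟨f x, ?_, hgf x hx⟩
      exact h.2 ▸ Set.mem_image_of_mem f hx
  have hfg : ∀ y ∈ Y, f (g y) = y := by
    intro y hy
    have hy' : y ∈ f '' (X : Set S) := h.2.symm ▸ hy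
    obtain ⟨x, hx, rfl⟩ := hy'
    rw [hgf x hx]
  exact ⟨g, ⟨hg, himg⟩, hgf, hfg⟩

theorem iso_comp (hFS : IsFusionSystem T₀ F₀) {f g : S → S} {X Y Z : Subgroup S}
    (h1 : IsFIso F₀ f X Y) (h2 : IsFIso F₀ g Y Z) : IsFIso F₀ (g ∘ f) X Z := by
  refine ⟨hFS.comp_mem f g X Y Z h1.1 h2.1, ?_⟩
  rw [Set.image_comp, h1.2, h2.2]

theorem hom_enlarge (hFS : IsFusionSystem T₀ F₀) {f : S → S} {X Y Y' : Subgroup S}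
    (h : F₀ f X Y) (hYY' : Y ≤ Y') (hY'T : Y' ≤ T₀) : F₀ f X Y' := by
  have hconj : F₀ (fun x => (1 : S)⁻¹ * x * 1) Y Y' :=
    hFS.conj_mem 1 (one_mem T₀) Y Y' (hFS.le_base f X Y h).2 hY'T
      (fun x hx => by simpa using hYY' hx)
  have hcomp := hFS.comp_mem f _ X Y Y' h hconj
  exact hFS.of_eqOn _ _ X Y' hcomp (fun x _ => by simp)

theorem isFIso_of_image (hFS : IsFusionSystem T₀ F₀) {g : S → S} {A B A' B' : Subgroup S}
    (hg : F₀ g A B) (hA' : A' ≤ A) (hB' : B' ≤ B) (himg : g '' (A' : Set S) = (B' : Set S)) :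
    IsFIso F₀ g A' B' :=
  ⟨hFS.restrict_mem g A B A' B' hg hA' hB'
      (fun x hx => himg ▸ Set.mem_image_of_mem g hx), himg⟩

theorem fconj_refl (hFS : IsFusionSystem T₀ F₀) {X : Subgroup S} (hX : X ≤ T₀) :
    X ∈ FConj F₀ X := by
  refine ⟨fun x => (1 : S)⁻¹ * x * 1,
    hFS.conj_mem 1 (one_mem T₀) X X hX hX (fun x hx => by simpa using hx), ?_⟩
  ext y; constructor
  · rintro ⟨x, hx, rfl⟩; simpa using hx
  · intro hy; exact ⟨y, hy, by simp⟩

theorem fconj_symm (hFS : IsFusionSystem T₀ F₀) {X Y : Subgroup S}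
    (h : Y ∈ FConj F₀ X) : X ∈ FConj F₀ Y := by
  obtain ⟨f, hf⟩ := h
  obtain ⟨g, hg, -, -⟩ := iso_inv hFS hf
  exact ⟨g, hg⟩

theorem fconj_trans (hFS : IsFusionSystem T₀ F₀) {X Y Z : Subgroup S}
    (h1 : Y ∈ FConj F₀ X) (h2 : Z ∈ FConj F₀ Y) : Z ∈ FConj F₀ X := by
  obtain ⟨f, hf⟩ := h1; obtain ⟨g, hg⟩ := h2
  exact ⟨g ∘ f, iso_comp hFS hf hg⟩

theorem conj_formula (hFS : IsFusionSystem T₀ F₀) {f : S → S} {D E : Subgroup S}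
    (h : F₀ f D E) {x n : S} (hx : x ∈ D) (hn : n ∈ D) :
    f (x * n * x⁻¹) = f x * f n * (f x)⁻¹ := by
  rw [fmap_mul hFS h (mul_mem hx hn) (inv_mem hx), fmap_mul hFS h hx hn, fmap_inv hFS h hx]

theorem mapsTo_normalizer (hFS : IsFusionSystem T₀ F₀) {f : S → S} {D E : Subgroup S}
    (h : F₀ f D E) {P P' : Subgroup S} (hPD : P ≤ D)
    (himg : f '' (P : Set S) = (P' : Set S)) {x : S} (hx : x ∈ D)
    (hxn : x ∈ (Subgroup.normalizer ((P : Subgroup S) : Set S))) : f x ∈ (Subgroup.normalizer ((P' : Subgroup S) : Set S)) := by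
  rw [Subgroup.mem_normalizer_iff]
  intro b
  constructor
  · intro hb
    have hb' : b ∈ f '' (P : Set S) := himg.symm ▸ hb
    obtain ⟨p, hp, rfl⟩ := hb'
    have hcp : x * p * x⁻¹ ∈ P := (Subgroup.mem_normalizer_iff.mp hxn p).mp hp
    have : f (x * p * x⁻¹) = f x * f p * (f x)⁻¹ :=
      conj_formula hFS h hx (hPD hp)
    rw [← this, ← SetLike.mem_coe, ← himg]
    exact Set.mem_image_of_mem f (SetLike.mem_coe.mpr hcp)
  · intro hb
    have hb' : f x * b * (f x)⁻¹ ∈ f '' (P : Set S) := himg.symm ▸ hb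
    obtain ⟨p, hp, hfp⟩ := hb'
    have hxinv : x⁻¹ ∈ (Subgroup.normalizer ((P : Subgroup S) : Set S)) := inv_mem hxn
    have hq : x⁻¹ * p * x ∈ P := by
      have := (Subgroup.mem_normalizer_iff.mp hxinv p).mp hp
      simpa using this
    have hcalc : f (x⁻¹ * p * x) = (f x)⁻¹ * f p * f x := by
      have h1 : f (x⁻¹ * p * (x⁻¹)⁻¹) = f x⁻¹ * f p * (f x⁻¹)⁻¹ :=
        conj_formula hFS h (inv_mem hx) (hPD hp)
      rw [inv_inv] at h1
      rw [h1, fmap_inv hFS h hx, inv_inv]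
    have hb2 : b = f (x⁻¹ * p * x) := by
      rw [hcalc, hfp]; group
    rw [hb2, ← SetLike.mem_coe, ← himg]
    exact Set.mem_image_of_mem f (SetLike.mem_coe.mpr hq)

end Basic

end StratProof

namespace StratProof

open Set Subgroup

variable {S : Type*} [Group S]

section Dim

variable {T₀ : Subgroup S} {F₀ : HomPred S} {Ω₀ : Set (Subgroup S)}
  {star₀ : Subgroup S → Subgroup S}

/-- a strict chain in `Ω₀` of length `n` ending at `A` -/
def ChainTo (Ω₀ : Set (Subgroup S)) (A : Subgroup S) (n : ℕ) : Prop :=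
  ∃ c : Fin (n + 1) → Subgroup S,
    StrictMono c ∧ (∀ i, c i ∈ Ω₀) ∧ c (Fin.last n) = A

theorem dimEnd_eq_sSup (A : Subgroup S) :
    dimEnd Ω₀ A = sSup {n | ChainTo Ω₀ A n} := rfl

theorem chain_bdd (hST : IsStratification T₀ F₀ Ω₀ star₀) (A : Subgroup S) :
    BddAbove {n | ChainTo Ω₀ A n} := by
  obtain ⟨Nb, hNb⟩ := hST.finDim
  exact ⟨Nb, fun n hn => by obtain ⟨c, h1, h2, _⟩ := hn; exact hNb n ⟨c, h1, h2⟩⟩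

theorem le_dimEnd (hST : IsStratification T₀ F₀ Ω₀ star₀) {A : Subgroup S} {n : ℕ}
    (h : ChainTo Ω₀ A n) : n ≤ dimEnd Ω₀ A :=
  le_csSup (chain_bdd hST A) h

theorem chain_zero {A : Subgroup S} (hA : A ∈ Ω₀) : ChainTo Ω₀ A 0 := by
  refine ⟨fun _ => A, ?_, fun _ => hA, rfl⟩
  intro i j hij
  exact absurd (Fin.lt_iff_val_lt_val.mp hij) (by omega)

theorem dimEnd_chain (hST : IsStratification T₀ F₀ Ω₀ star₀) {A : Subgroup S}
    (hA : A ∈ Ω₀) : ChainTo Ω₀ A (dimEnd Ω₀ A) := by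
  have h := Nat.sSup_mem (s := {n | ChainTo Ω₀ A n}) ⟨0, chain_zero hA⟩ (chain_bdd hST A)
  exact h

theorem chain_append {A B : Subgroup S} {n : ℕ} (h : ChainTo Ω₀ A n) (hAB : A < B)
    (hB : B ∈ Ω₀) : ChainTo Ω₀ B (n + 1) := by
  obtain ⟨c, hsm, hmem, hlast⟩ := h
  refine ⟨fun i => if hi : (i : ℕ) < n + 1 then c ⟨i, hi⟩ else B, ?_, ?_, ?_⟩
  · intro i j hij
    have hij' : (i : ℕ) < (j : ℕ) := Fin.lt_iff_val_lt_val.mp hij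
    by_cases hj : (j : ℕ) < n + 1
    · have hi : (i : ℕ) < n + 1 := lt_trans hij' hj
      simp only [dif_pos hi, dif_pos hj]
      exact hsm (by exact Fin.lt_iff_val_lt_val.mpr hij')
    · simp only [dif_neg hj]
      by_cases hi : (i : ℕ) < n + 1
      · simp only [dif_pos hi]
        calc c ⟨i, hi⟩ ≤ c (Fin.last n) := hsm.monotone (Fin.le_last _)
        _ = A := hlast
        _ < B := hAB
      · exfalso
        have hi2 : (i : ℕ) < n + 2 := i.2
        have hj2 : (j : ℕ) < n + 2 := j.2
        omega
  · intro i
    by_cases hi : (i : ℕ) < n + 1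
    · simp only [dif_pos hi]; exact hmem _
    · simp only [dif_neg hi]; exact hB
  · have : ¬ ((Fin.last (n + 1) : ℕ) < n + 1) := by simp
    simp only [dif_neg this]

theorem dimEnd_lt_dimEnd (hST : IsStratification T₀ F₀ Ω₀ star₀) {A B : Subgroup S}
    (hAB : A < B) (hA : A ∈ Ω₀) (hB : B ∈ Ω₀) : dimEnd Ω₀ A < dimEnd Ω₀ B :=
  lt_of_lt_of_le (Nat.lt_succ_self _)
    (le_dimEnd hST (chain_append (dimEnd_chain hST hA) hAB hB))

theorem dimEnd_le_dimEnd (hST : IsStratification T₀ F₀ Ω₀ star₀) {A B : Subgroup S}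
    (hAB : A ≤ B) (hA : A ∈ Ω₀) (hB : B ∈ Ω₀) : dimEnd Ω₀ A ≤ dimEnd Ω₀ B := by
  rcases eq_or_lt_of_le hAB with h | h
  · rw [h]
  · exact (dimEnd_lt_dimEnd hST h hA hB).le

theorem star_eq_of_dim_le (hST : IsStratification T₀ F₀ Ω₀ star₀) {M L : Subgroup S}
    (hML : M ≤ L) (hM : M ≤ T₀) (hL : L ≤ T₀)
    (hdim : dimEnd Ω₀ (star₀ L) ≤ dimEnd Ω₀ (star₀ M)) : star₀ M = star₀ L := by
  have h1 : star₀ M ≤ star₀ L := hST.star_mono M L hM hL hML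
  rcases eq_or_lt_of_le h1 with h | h
  · exact h
  · exact absurd hdim (not_le.mpr
      (dimEnd_lt_dimEnd hST h (hST.star_mem M hM) (hST.star_mem L hL)))

theorem dimEnd_le_of_iso (hFS : IsFusionSystem T₀ F₀)
    (hST : IsStratification T₀ F₀ Ω₀ star₀) {g : S → S} {A B : Subgroup S}
    (hiso : IsFIso F₀ g A B) (hA : A ∈ Ω₀) (hB : B ∈ Ω₀) :
    dimEnd Ω₀ A ≤ dimEnd Ω₀ B := by
  rw [dimEnd_eq_sSup A]
  apply csSup_le ⟨0, by exact chain_zero hA⟩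
  intro n hn
  obtain ⟨c, hsm, hmem, hlast⟩ := hn
  have hciA : ∀ i, c i ≤ A := by
    intro i
    calc c i ≤ c (Fin.last n) := hsm.monotone (Fin.le_last _)
    _ = A := hlast
  have hriso : ∀ i, IsFIso F₀ g (c i) (imSub g (c i)) :=
    fun i => iso_restrict hFS hiso.1 (hciA i)
  apply le_dimEnd hST
  refine ⟨fun i => imSub g (c i), ?_, ?_, ?_⟩
  · intro i j hij
    have hle : imSub g (c i) ≤ imSub g (c j) := by
      apply Subgroup.closure_mono
      exact Set.image_mono (f := g) (SetLike.coe_subset_coe.mpr (hsm hij).le)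
    rcases eq_or_lt_of_le hle with heq | h
    · exfalso
      have hset : g '' ((c i : Set S)) = g '' ((c j : Set S)) := by
        rw [← imSub_coe hFS (hriso i).1, ← imSub_coe hFS (hriso j).1, heq]
      have hsub : (c j : Set S) ⊆ (c i : Set S) := by
        intro x hx
        have : g x ∈ g '' ((c i : Set S)) := hset ▸ Set.mem_image_of_mem g hx
        obtain ⟨x', hx', hgx⟩ := this
        have hinj := hFS.injOn g A B hiso.1
        have : x' = x := hinj (hciA i hx') (hciA j hx) hgx
        exact this ▸ hx'
      exact absurd (SetLike.coe_subset_coe.mp hsub) (hsm hij).not_ge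
    · exact h
  · intro i
    exact hST.conj_invariant (c i) (hmem i) g _ (hriso i)
  · show imSub g (c (Fin.last n)) = B
    rw [hlast]
    exact imSub_eq_of_iso hFS hiso

theorem dim_star_eq_of_iso (hFS : IsFusionSystem T₀ F₀)
    (hST : IsStratification T₀ F₀ Ω₀ star₀) {f : S → S} {X Y : Subgroup S}
    (hiso : IsFIso F₀ f X Y) :
    dimEnd Ω₀ (star₀ X) = dimEnd Ω₀ (star₀ Y) := by
  have hX : X ≤ T₀ := (hFS.le_base f X Y hiso.1).1
  have hY : Y ≤ T₀ := (hFS.le_base f X Y hiso.1).2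
  obtain ⟨g, hg, -⟩ := hST.extend_star f X Y hiso
  have h1 := dimEnd_le_of_iso hFS hST hg (hST.star_mem X hX) (hST.star_mem Y hY)
  obtain ⟨g', hg', -, -⟩ := iso_inv hFS hg
  have h2 := dimEnd_le_of_iso hFS hST hg' (hST.star_mem Y hY) (hST.star_mem X hX)
  exact le_antisymm h1 h2

end Dim

end StratProof

namespace StratProof

open Set Subgroup

variable {S : Type*} [Group S]

section Lemma29

variable {T₀ : Subgroup S} {F₀ : HomPred S} {Ω₀ : Set (Subgroup S)}
  {star₀ : Subgroup S → Subgroup S}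

/-- Lemma 2.9: a fully normalized subgroup with a normalizer-inductive conjugate
is itself normalizer-inductive. -/
theorem normInd_of_fullyNorm (hFS : IsFusionSystem T₀ F₀)
    (hST : IsStratification T₀ F₀ Ω₀ star₀) (R : Subgroup S)
    (hfn : FullyNormalizedIn T₀ F₀ Ω₀ star₀ R)
    (hex : ∃ Y ∈ FConj F₀ R, NormalizerInductive T₀ F₀ Y) :
    NormalizerInductive T₀ F₀ R := by
  obtain ⟨Y, hYR, hYni⟩ := hex
  obtain ⟨f₀, hf₀⟩ := id hYR
  have hR_T : R ≤ T₀ := (hFS.le_base f₀ R Y hf₀.1).1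
  have hRY : R ∈ FConj F₀ Y := fconj_symm hFS hYR
  obtain ⟨χ, hχ, hχR⟩ := hYni R hRY
  set DR := (Subgroup.normalizer ((R : Subgroup S) : Set S)) ⊓ T₀ with hDR
  set DY := (Subgroup.normalizer ((Y : Subgroup S) : Set S)) ⊓ T₀ with hDY
  have hDR_T : DR ≤ T₀ := inf_le_right
  have hDY_T : DY ≤ T₀ := inf_le_right
  set M := imSub χ DR with hM
  have hisoM : IsFIso F₀ χ DR M := isoOnto hFS hχ
  have hM_le : M ≤ DY := imSub_le hFS hχ
  have hM_T : M ≤ T₀ := le_trans hM_le hDY_T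
  -- dimension comparison
  have d1 : dimEnd Ω₀ (star₀ DR) = dimEnd Ω₀ (star₀ M) := dim_star_eq_of_iso hFS hST hisoM
  have d2 : dimEnd Ω₀ (star₀ DY) ≤ dimEnd Ω₀ (star₀ DR) := hfn Y hYR
  have d3 : dimEnd Ω₀ (star₀ M) ≤ dimEnd Ω₀ (star₀ DY) :=
    dimEnd_le_dimEnd hST (hST.star_mono M DY hM_T hDY_T hM_le)
      (hST.star_mem M hM_T) (hST.star_mem DY hDY_T)
  have hstar : star₀ M = star₀ DY :=
    star_eq_of_dim_le hST hM_le hM_T hDY_T (le_trans d2 (le_of_eq d1))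
  obtain ⟨ψ, hψiso, hψχ, hχψ⟩ := iso_inv hFS hisoM
  obtain ⟨Ψ, hΨiso, hΨeq⟩ := hST.extend_star ψ M DR hψiso
  have hR_DR : R ≤ DR := le_inf Subgroup.le_normalizer hR_T
  have hY_M : (Y : Set S) ⊆ (M : Set S) := by
    intro y hy
    have hy' : y ∈ χ '' (R : Set S) := hχR.symm ▸ hy
    obtain ⟨r, hr, rfl⟩ := hy'
    rw [imSub_coe hFS hχ]
    exact Set.mem_image_of_mem χ (hR_DR hr)
  have hΨY : Ψ '' (Y : Set S) = (R : Set S) := by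
    apply Set.Subset.antisymm
    · rintro _ ⟨y, hy, rfl⟩
      have hy' : y ∈ χ '' (R : Set S) := hχR.symm ▸ hy
      obtain ⟨r, hr, rfl⟩ := hy'
      rw [hΨeq (hY_M hy), hψχ _ (hR_DR hr)]
      exact hr
    · intro r hr
      have hχr : χ r ∈ (Y : Set S) := hχR ▸ Set.mem_image_of_mem χ hr
      refine ⟨χ r, hχr, ?_⟩
      rw [hΨeq (hY_M hχr), hψχ _ (hR_DR hr)]
  have hDY_starM : (DY : Set S) ⊆ ((star₀ M : Subgroup S) : Set S) := by
    rw [hstar]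
    exact SetLike.coe_subset_coe.mpr (hST.le_star DY hDY_T)
  have hDY_starM' : DY ≤ star₀ M := by
    rw [hstar]; exact hST.le_star DY hDY_T
  have hmaps : Set.MapsTo Ψ (DY : Set S) (DR : Set S) := by
    intro x hx
    have hxM : x ∈ ((star₀ M : Subgroup S) : Set S) := hDY_starM hx
    have hxT : Ψ x ∈ T₀ := by
      have := hΨiso.1
      have h1 : Ψ x ∈ ((star₀ DR : Subgroup S) : Set S) := hFS.mapsTo _ _ _ hΨiso.1 hxM
      exact hST.omega_le (star₀ DR) (hST.star_mem DR hDR_T) h1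
    have hxnorm : Ψ x ∈ (Subgroup.normalizer ((R : Subgroup S) : Set S)) := by
      refine mapsTo_normalizer hFS hΨiso.1 ?_ hΨY hxM ?_
      · intro y hy
        exact SetLike.coe_subset_coe.mp (le_trans (le_of_eq rfl) (hST.le_star M hM_T))
          (hY_M hy)
      · exact (Subgroup.mem_inf.mp hx).1
    exact Subgroup.mem_inf.mpr ⟨hxnorm, hxT⟩
  have hΨhom : F₀ Ψ DY DR :=
    hFS.restrict_mem Ψ (star₀ M) (star₀ DR) DY DR hΨiso.1 hDY_starM'
      (hST.le_star DR hDR_T) hmaps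
  -- conclusion
  intro X hXR
  have hXY : X ∈ FConj F₀ Y := fconj_trans hFS hRY hXR
  obtain ⟨χX, hχX, hχXim⟩ := hYni X hXY
  refine ⟨Ψ ∘ χX, hFS.comp_mem χX Ψ ((Subgroup.normalizer ((X : Subgroup S) : Set S)) ⊓ T₀) DY DR hχX hΨhom, ?_⟩
  rw [Set.image_comp, hχXim, hΨY]

end Lemma29

end StratProof

namespace StratProof

open Set Subgroup

variable {S : Type*} [Group S]

section ImageSup

variable {T₀ : Subgroup S} {F₀ : HomPred S}

theorem image_sup (hFS : IsFusionSystem T₀ F₀) {g : S → S} {A B X₁ X₂ : Subgroup S}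
    (hg : F₀ g A B) (h1 : X₁ ≤ A) (h2 : X₂ ≤ A) :
    g '' ((X₁ ⊔ X₂ : Subgroup S) : Set S) =
      ((imSub g X₁ ⊔ imSub g X₂ : Subgroup S) : Set S) := by
  have hsupA : X₁ ⊔ X₂ ≤ A := sup_le h1 h2
  have hmem : ∀ z, z ∈ Subgroup.closure ((X₁ : Set S) ∪ (X₂ : Set S)) → z ∈ A := by
    intro z hz
    apply hsupA
    rw [Subgroup.sup_eq_closure]
    exact hz
  have hkey : ∀ x ∈ X₁ ⊔ X₂, g x ∈ imSub g X₁ ⊔ imSub g X₂ := by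
    intro x hx
    rw [Subgroup.sup_eq_closure] at hx
    refine Subgroup.closure_induction ?_ ?_ ?_ ?_ hx
    · rintro y (hy | hy)
      · exact le_sup_left (α := Subgroup S) (a := imSub g X₁)
          (Subgroup.subset_closure (Set.mem_image_of_mem g hy))
      · exact le_sup_right (α := Subgroup S)
          (Subgroup.subset_closure (Set.mem_image_of_mem g hy))
    · rw [fmap_one hFS hg]; exact one_mem _
    · intro a b ha hb iha ihb
      rw [fmap_mul hFS hg (hmem a ha) (hmem b hb)]
      exact mul_mem iha ihb
    · intro a ha iha
      rw [fmap_inv hFS hg (hmem a ha)]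
      exact inv_mem iha
  have hrestr : F₀ g (X₁ ⊔ X₂) B :=
    hFS.restrict_mem g A B (X₁ ⊔ X₂) B hg hsupA le_rfl ((hFS.mapsTo g A B hg).mono_left hsupA)
  apply Set.Subset.antisymm
  · rintro _ ⟨x, hx, rfl⟩
    exact hkey x hx
  · have hle : imSub g X₁ ⊔ imSub g X₂ ≤ imSub g (X₁ ⊔ X₂) := by
      apply sup_le
      · exact Subgroup.closure_mono (Set.image_mono (f := g) (by
          exact SetLike.coe_subset_coe.mpr le_sup_left))
      · exact Subgroup.closure_mono (Set.image_mono (f := g) (by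
          exact SetLike.coe_subset_coe.mpr le_sup_right))
    intro x hx
    have : x ∈ imSub g (X₁ ⊔ X₂) := hle hx
    rw [← imSub_coe hFS hrestr]
    exact this

theorem image_of_eqOn {g f : S → S} {P : Subgroup S} (h : Set.EqOn g f (P : Set S)) :
    g '' (P : Set S) = f '' (P : Set S) :=
  Set.image_congr h

theorem inv_image_eq {g h : S → S} {A : Subgroup S} {Pa : Set S} {Pb : Set S}
    (hinv : ∀ z ∈ A, h (g z) = z) (hPa : Pa ⊆ (A : Set S)) (himg : g '' Pa = Pb) :
    h '' Pb = Pa := by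
  apply Set.Subset.antisymm
  · rintro _ ⟨b, hb, rfl⟩
    have hb' : b ∈ g '' Pa := himg ▸ hb
    obtain ⟨a, ha, rfl⟩ := hb'
    rw [hinv a (hPa ha)]
    exact ha
  · intro a ha
    refine ⟨g a, himg ▸ Set.mem_image_of_mem g ha, hinv a (hPa ha)⟩

end ImageSup

end StratProof

namespace StratProof

open Set Subgroup

variable {S : Type*} [Group S]

section NFusSec

variable {F : HomPred S} {V : Subgroup S}

/-- the ambient-with-bounds fusion system on `N_S(V)` -/
def E0 (F : HomPred S) (V : Subgroup S) : HomPred S := fun f X Y =>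
  F f X Y ∧ X ≤ (Subgroup.normalizer ((V : Subgroup S) : Set S)) ∧ Y ≤ (Subgroup.normalizer ((V : Subgroup S) : Set S)) ∧ Set.MapsTo f (X : Set S) (Y : Set S)

theorem conjV {g : S} (hg : g ∈ (Subgroup.normalizer ((V : Subgroup S) : Set S))) :
    (fun x => g⁻¹ * x * g) '' (V : Set S) = (V : Set S) := by
  apply Set.Subset.antisymm
  · rintro _ ⟨v, hv, rfl⟩
    have hginv : g⁻¹ ∈ (Subgroup.normalizer ((V : Subgroup S) : Set S)) := inv_mem hg
    have := (Subgroup.mem_normalizer_iff.mp hginv v).mp hv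
    simpa using this
  · intro v hv
    refine ⟨g * v * g⁻¹, ?_, by group⟩
    exact (Subgroup.mem_normalizer_iff.mp hg v).mp hv

theorem conj_hom_top (hF : IsFusionSystem ⊤ F) (g : S) :
    F (fun x => g⁻¹ * x * g) ⊤ ⊤ :=
  hF.conj_mem g (Subgroup.mem_top g) ⊤ ⊤ le_top le_top (fun x _ => Subgroup.mem_top _)

theorem E0_fs (hF : IsFusionSystem ⊤ F) (V : Subgroup S) :
    IsFusionSystem (Subgroup.normalizer ((V : Subgroup S) : Set S)) (E0 F V) := by
  constructor
  · exact fun f X Y h => ⟨h.2.1, h.2.2.1⟩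
  · exact fun f X Y h => h.2.2.2
  · exact fun f X Y h => hF.injOn f X Y h.1
  · exact fun f X Y h => hF.map_mul' f X Y h.1
  · intro f g X Y h heq
    exact ⟨hF.of_eqOn f g X Y h.1 heq, h.2.1, h.2.2.1,
      fun x hx => by rw [heq hx]; exact h.2.2.2 hx⟩
  · intro g hg X Y hX hY hpt
    exact ⟨hF.conj_mem g (Subgroup.mem_top g) X Y le_top le_top hpt, hX, hY,
      fun x hx => hpt x hx⟩
  · intro f g X Y Z h1 h2
    exact ⟨hF.comp_mem f g X Y Z h1.1 h2.1, h1.2.1, h2.2.2.1, h2.2.2.2.comp h1.2.2.2⟩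
  · intro f X Y X₀ Y₀ h hX₀ hY₀ hmt
    exact ⟨hF.restrict_mem f X Y X₀ Y₀ h.1 hX₀ hY₀ hmt, le_trans hX₀ h.2.1,
      le_trans hY₀ h.2.2.1, hmt⟩
  · intro f X Y h
    refine ⟨hF.corestrict_mem f X Y h.1, h.2.1, ?_, ?_⟩
    · exact le_trans ((Subgroup.closure_le Y).mpr h.2.2.2.image_subset) h.2.2.1
    · exact fun x hx => Subgroup.subset_closure (Set.mem_image_of_mem f hx)
  · intro f X Y h
    obtain ⟨g, hg, hgf⟩ := hF.inv_mem f X Y h.1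
    refine ⟨g, ⟨hg, ?_, h.2.1, ?_⟩, hgf⟩
    · exact le_trans ((Subgroup.closure_le Y).mpr h.2.2.2.image_subset) h.2.2.1
    · intro p hp
      have hp' : p ∈ f '' (X : Set S) := by
        rw [← imSub_coe hF h.1]; exact hp
      obtain ⟨x, hx, rfl⟩ := hp'
      rw [hgf x hx]; exact hx

theorem NPhi_sub_E0 (hF : IsFusionSystem ⊤ F) :
    ∀ f X Y, NPhi F V f X Y → E0 F V f X Y := by
  intro f X Y h
  exact ⟨h.2.2.1.1, h.1, h.2.1, hF.mapsTo f X Y h.2.2.1.1⟩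

theorem NFus_sub_E0 (hF : IsFusionSystem ⊤ F) {f : S → S} {X Y : Subgroup S}
    (h : NFus F V f X Y) : E0 F V f X Y :=
  h (E0 F V) (E0_fs hF V) (fun _ _ _ hh => hh.1) (NPhi_sub_E0 hF)

/-- the invariant fusion system recording extendability to `V` -/
def Ephi (F : HomPred S) (V : Subgroup S) : HomPred S := fun f X Y =>
  E0 F V f X Y ∧ ∃ g, IsFIso F g (V ⊔ X) (V ⊔ imSub f X) ∧ Set.EqOn g f (X : Set S) ∧
    g '' (V : Set S) = (V : Set S)

theorem imSub_eq_imSub_of_eqOn {f g : S → S} {X : Subgroup S}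
    (h : Set.EqOn g f (X : Set S)) : imSub g X = imSub f X := by
  unfold imSub
  rw [Set.image_congr h]

theorem imSub_V_eq {g : S → S} (hgV : g '' (V : Set S) = (V : Set S)) : imSub g V = V := by
  apply SetLike.coe_injective
  show ((Subgroup.closure (g '' (V : Set S)) : Subgroup S) : Set S) = (V : Set S)
  rw [hgV, Subgroup.closure_eq]

theorem Ephi_fs (hF : IsFusionSystem ⊤ F) (V : Subgroup S) :
    IsFusionSystem (Subgroup.normalizer ((V : Subgroup S) : Set S)) (Ephi F V) := by
  have hE0 := E0_fs hF V
  constructor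
  · exact fun f X Y h => hE0.le_base f X Y h.1
  · exact fun f X Y h => h.1.2.2.2
  · exact fun f X Y h => hF.injOn f X Y h.1.1
  · exact fun f X Y h => hF.map_mul' f X Y h.1.1
  -- of_eqOn
  · intro f g X Y h heq
    obtain ⟨h0, gw, hgw, hgweq, hgwV⟩ := h
    refine ⟨hE0.of_eqOn f g X Y h0 heq, gw, ?_, fun x hx => by rw [hgweq hx, heq hx], hgwV⟩
    rwa [imSub_eq_imSub_of_eqOn heq]
  -- conj_mem
  · intro g hg X Y hX hY hpt
    refine ⟨⟨hF.conj_mem g (Subgroup.mem_top g) X Y le_top le_top hpt, hX, hY,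
      fun x hx => hpt x hx⟩, fun x => g⁻¹ * x * g, ?_, fun x _ => rfl, conjV hg⟩
    have htop := conj_hom_top hF g
    refine isFIso_of_image hF htop le_top le_top ?_
    have himg := image_sup hF htop (le_top : V ≤ ⊤) (le_top : X ≤ ⊤)
    rw [himg, imSub_V_eq (conjV hg)]
  -- comp_mem
  · intro f1 f2 X Y Z h1 h2
    obtain ⟨h10, g1, hg1, hg1eq, hg1V⟩ := h1
    obtain ⟨h20, g2, hg2, hg2eq, hg2V⟩ := h2
    have hP1Y : imSub f1 X ≤ Y := imSub_le hF h10.1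
    have hP1coe : (imSub f1 X : Set S) = f1 '' (X : Set S) := imSub_coe hF h10.1
    have hcomp : F (f2 ∘ f1) X Z := hF.comp_mem f1 f2 X Y Z h10.1 h20.1
    have hPcoe : (imSub (f2 ∘ f1) X : Set S) = (f2 ∘ f1) '' (X : Set S) :=
      imSub_coe hF hcomp
    -- the image of V ⊔ imSub f1 X under g2
    have himg2 : g2 '' ((V ⊔ imSub f1 X : Subgroup S) : Set S) =
        ((V ⊔ imSub (f2 ∘ f1) X : Subgroup S) : Set S) := by
      have hsup := image_sup hF hg2.1 (le_sup_left : V ≤ V ⊔ Y)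
        (le_trans hP1Y le_sup_right : imSub f1 X ≤ V ⊔ Y)
      have heq : imSub g2 (imSub f1 X) = imSub (f2 ∘ f1) X := by
        apply SetLike.coe_injective
        rw [imSub_coe hF (hom_restrict hF hg2.1 (le_trans hP1Y le_sup_right)), hPcoe]
        show g2 '' ((imSub f1 X : Subgroup S) : Set S) = (f2 ∘ f1) '' (X : Set S)
        rw [hP1coe, Set.image_comp]
        apply Set.image_congr
        rintro _ ⟨x, hx, rfl⟩
        exact hg2eq (h10.2.2.2 hx)
      rw [hsup, imSub_V_eq hg2V, heq]
    have hmid : IsFIso F g2 (V ⊔ imSub f1 X) (V ⊔ imSub (f2 ∘ f1) X) := by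
      refine isFIso_of_image hF hg2.1 (sup_le_sup_left hP1Y V) ?_ himg2
      apply sup_le_sup_left
      apply (Subgroup.closure_le _).mpr
      rintro _ ⟨x, hx, rfl⟩
      have hfx : f1 x ∈ (Y : Set S) := h10.2.2.2 hx
      show (f2 ∘ f1) x ∈ ((imSub f2 Y : Subgroup S) : Set S)
      rw [imSub_coe hF h20.1]
      exact Set.mem_image_of_mem f2 hfx
    refine ⟨hE0.comp_mem f1 f2 X Y Z h10 h20, g2 ∘ g1, iso_comp hF hg1 hmid, ?_, ?_⟩
    · intro x hx
      show g2 (g1 x) = f2 (f1 x)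
      rw [hg1eq hx]
      exact hg2eq (h10.2.2.2 hx)
    · rw [Set.image_comp, hg1V, hg2V]
  -- restrict_mem
  · intro f X Y X₀ Y₀ h hX₀ hY₀ hmt
    obtain ⟨h0, g, hg, hgeq, hgV⟩ := h
    have h0' : E0 F V f X₀ Y₀ := hE0.restrict_mem f X Y X₀ Y₀ h0 hX₀ hY₀ hmt
    have hP₀le : imSub f X₀ ≤ imSub f X :=
      Subgroup.closure_mono (Set.image_mono (f := f) (SetLike.coe_subset_coe.mpr hX₀))
    have himg : g '' ((V ⊔ X₀ : Subgroup S) : Set S) =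
        ((V ⊔ imSub f X₀ : Subgroup S) : Set S) := by
      have hsup := image_sup hF hg.1 (le_sup_left : V ≤ V ⊔ X)
        (le_trans hX₀ le_sup_right : X₀ ≤ V ⊔ X)
      have heq : imSub g X₀ = imSub f X₀ := by
        apply SetLike.coe_injective
        rw [imSub_coe hF (hom_restrict hF hg.1 (le_trans hX₀ le_sup_right)),
          imSub_coe hF h0'.1]
        exact Set.image_congr (fun x hx => hgeq (hX₀ hx))
      rw [hsup, imSub_V_eq hgV, heq]
    refine ⟨h0', g, isFIso_of_image hF hg.1 (sup_le_sup_left hX₀ V)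
      (sup_le_sup_left hP₀le V) himg, fun x hx => hgeq (hX₀ hx), hgV⟩
  -- corestrict_mem
  · intro f X Y h
    obtain ⟨h0, g, hg, hgeq, hgV⟩ := h
    exact ⟨hE0.corestrict_mem f X Y h0, g, hg, hgeq, hgV⟩
  -- inv_mem
  · intro f X Y h
    obtain ⟨h0, g, hg, hgeq, hgV⟩ := h
    obtain ⟨hi, hiiso, hig, hgi⟩ := iso_inv hF hg
    have hPcoe : (imSub f X : Set S) = f '' (X : Set S) := imSub_coe hF h0.1
    have hXsub : (X : Set S) ⊆ ((V ⊔ X : Subgroup S) : Set S) :=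
      SetLike.coe_subset_coe.mpr le_sup_right
    have hPsub : ((imSub f X : Subgroup S) : Set S) ⊆
        ((V ⊔ imSub f X : Subgroup S) : Set S) :=
      SetLike.coe_subset_coe.mpr le_sup_right
    have hmt : Set.MapsTo hi ((imSub f X : Subgroup S) : Set S) (X : Set S) := by
      intro p hp
      rw [hPcoe] at hp
      obtain ⟨x, hx, rfl⟩ := hp
      rw [← hgeq hx, hig _ (hXsub hx)]
      exact hx
    have hFhi : F hi (imSub f X) X :=
      hF.restrict_mem hi (V ⊔ imSub f X) (V ⊔ X) (imSub f X) X hiiso.1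
        le_sup_right le_sup_right hmt
    have hinvf : ∀ x ∈ X, hi (f x) = x := by
      intro x hx
      rw [← hgeq hx, hig _ (hXsub hx)]
    have hhiP : hi '' ((imSub f X : Subgroup S) : Set S) = (X : Set S) := by
      apply Set.Subset.antisymm
      · exact hmt.image_subset
      · intro x hx
        refine ⟨f x, ?_, hinvf x hx⟩
        rw [hPcoe]; exact Set.mem_image_of_mem f hx
    have hiV : hi '' (V : Set S) = (V : Set S) := by
      have hVsub : (V : Set S) ⊆ ((V ⊔ X : Subgroup S) : Set S) :=
        SetLike.coe_subset_coe.mpr le_sup_left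
      exact inv_image_eq hig hVsub hgV
    have hE0hi : E0 F V hi (imSub f X) X :=
      ⟨hFhi, le_trans (imSub_le hF h0.1) h0.2.2.1, h0.2.1, hmt⟩
    refine ⟨hi, ⟨hE0hi, hi, ?_, fun p _ => rfl, hiV⟩, hinvf⟩
    have heqX : imSub hi (imSub f X) = X := by
      apply SetLike.coe_injective
      rw [imSub_coe hF hFhi, hhiP]
    show IsFIso F hi (V ⊔ imSub f X) (V ⊔ imSub hi (imSub f X))
    rw [heqX]
    exact hiiso

theorem NPhi_sub_Ephi (hF : IsFusionSystem ⊤ F) :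
    ∀ f X Y, NPhi F V f X Y → Ephi F V f X Y := by
  intro f X Y h
  obtain ⟨hX, hY, hiso, g, hg, hgeq, hgV⟩ := h
  refine ⟨NPhi_sub_E0 hF f X Y ⟨hX, hY, hiso, g, hg, hgeq, hgV⟩, g, ?_, hgeq, hgV⟩
  rw [imSub_eq_of_iso hF hiso, sup_comm V X, sup_comm V Y]
  exact hg

theorem NFus_ext (hF : IsFusionSystem ⊤ F) {f : S → S} {X Y : Subgroup S}
    (h : NFus F V f X Y) :
    ∃ g, IsFIso F g (V ⊔ X) (V ⊔ imSub f X) ∧ Set.EqOn g f (X : Set S) ∧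
      g '' (V : Set S) = (V : Set S) :=
  (h (Ephi F V) (Ephi_fs hF V) (fun _ _ _ hh => hh.1.1) (NPhi_sub_Ephi hF)).2

theorem NFus_of_iso (hF : IsFusionSystem ⊤ F) {f : S → S} {X Y : Subgroup S}
    (hX : X ≤ (Subgroup.normalizer ((V : Subgroup S) : Set S))) (hY : Y ≤ (Subgroup.normalizer ((V : Subgroup S) : Set S))) (hVX : V ≤ X)
    (hiso : IsFIso F f X Y) (hfV : f '' (V : Set S) = (V : Set S)) :
    NFus F V f X Y := by
  intro E hE h1 h2
  apply h2
  have hVY : V ≤ Y := by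
    intro v hv
    have : (v : S) ∈ f '' (V : Set S) := hfV.symm ▸ hv
    obtain ⟨w, hw, rfl⟩ := this
    rw [← SetLike.mem_coe, ← hiso.2]
    exact Set.mem_image_of_mem f (hVX hw)
  refine ⟨hX, hY, hiso, f, ?_, fun x _ => rfl, hfV⟩
  rw [sup_eq_left.mpr hVX, sup_eq_left.mpr hVY]
  exact hiso

theorem NFus_enlarge {f : S → S} {X B B' : Subgroup S}
    (h : NFus F V f X B) (hBB' : B ≤ B') (hB' : B' ≤ (Subgroup.normalizer ((V : Subgroup S) : Set S))) :
    NFus F V f X B' := by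
  intro E hE h1 h2
  exact hom_enlarge hE (h E hE h1 h2) hBB' hB'

theorem NFus_fs (hF : IsFusionSystem ⊤ F) (V : Subgroup S) :
    IsFusionSystem (Subgroup.normalizer ((V : Subgroup S) : Set S)) (NFus F V) := by
  constructor
  · intro f X Y h
    have h0 := NFus_sub_E0 hF h
    exact ⟨h0.2.1, h0.2.2.1⟩
  · intro f X Y h
    exact (NFus_sub_E0 hF h).2.2.2
  · intro f X Y h
    exact hF.injOn f X Y (NFus_sub_E0 hF h).1
  · intro f X Y h
    exact hF.map_mul' f X Y (NFus_sub_E0 hF h).1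
  · intro f g X Y h heq E hE h1 h2
    exact hE.of_eqOn f g X Y (h E hE h1 h2) heq
  · intro g hg X Y hX hY hpt E hE h1 h2
    exact hE.conj_mem g hg X Y hX hY hpt
  · intro f g X Y Z hf hg E hE h1 h2
    exact hE.comp_mem f g X Y Z (hf E hE h1 h2) (hg E hE h1 h2)
  · intro f X Y X₀ Y₀ h hX₀ hY₀ hmt E hE h1 h2
    exact hE.restrict_mem f X Y X₀ Y₀ (h E hE h1 h2) hX₀ hY₀ hmt
  · intro f X Y h E hE h1 h2
    exact hE.corestrict_mem f X Y (h E hE h1 h2)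
  · intro f X Y h
    have h0 := NFus_sub_E0 hF h
    obtain ⟨g, hgiso, hgeq, hgV⟩ := NFus_ext hF h
    obtain ⟨hi, hiiso, hig, hgi⟩ := iso_inv hF hgiso
    have hPcoe : (imSub f X : Set S) = f '' (X : Set S) := imSub_coe hF h0.1
    have hXsub : (X : Set S) ⊆ ((V ⊔ X : Subgroup S) : Set S) :=
      SetLike.coe_subset_coe.mpr le_sup_right
    have hmt : Set.MapsTo hi ((imSub f X : Subgroup S) : Set S) (X : Set S) := by
      intro p hp
      rw [hPcoe] at hp
      obtain ⟨x, hx, rfl⟩ := hp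
      rw [← hgeq hx, hig _ (hXsub hx)]
      exact hx
    have hFhi : F hi (imSub f X) X :=
      hF.restrict_mem hi (V ⊔ imSub f X) (V ⊔ X) (imSub f X) X hiiso.1
        le_sup_right le_sup_right hmt
    have hinvf : ∀ x ∈ X, hi (f x) = x := by
      intro x hx
      rw [← hgeq hx, hig _ (hXsub hx)]
    have hhiP : hi '' ((imSub f X : Subgroup S) : Set S) = (X : Set S) := by
      apply Set.Subset.antisymm
      · exact hmt.image_subset
      · intro x hx
        refine ⟨f x, ?_, hinvf x hx⟩
        rw [hPcoe]; exact Set.mem_image_of_mem f hx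
    have hiV : hi '' (V : Set S) = (V : Set S) := by
      have hVsub : (V : Set S) ⊆ ((V ⊔ X : Subgroup S) : Set S) :=
        SetLike.coe_subset_coe.mpr le_sup_left
      exact inv_image_eq hig hVsub hgV
    have hPN : imSub f X ≤ (Subgroup.normalizer ((V : Subgroup S) : Set S)) := le_trans (imSub_le hF h0.1) h0.2.2.1
    refine ⟨hi, ?_, hinvf⟩
    intro E hE h1 h2
    apply h2
    refine ⟨hPN, h0.2.1, ⟨hFhi, hhiP⟩, hi, ?_, fun p _ => rfl, hiV⟩
    show IsFIso F hi (imSub f X ⊔ V) (X ⊔ V)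
    rw [sup_comm (imSub f X) V, sup_comm X V]
    exact hiiso

end NFusSec

end StratProof

namespace StratProof

open Set Subgroup

variable {S : Type*} [Group S]

section Bullet

variable {F : HomPred S} {V : Subgroup S} {Ω : Set (Subgroup S)}
  {star : Subgroup S → Subgroup S}

theorem V_le_bullet (hΩ : IsStratification ⊤ F Ω star) (X : Subgroup S) :
    V ≤ bulletStar star V X :=
  le_inf (le_trans le_sup_left (hΩ.le_star (V ⊔ X) le_top)) Subgroup.le_normalizer

theorem le_bullet (hΩ : IsStratification ⊤ F Ω star) {X : Subgroup S}
    (hX : X ≤ (Subgroup.normalizer ((V : Subgroup S) : Set S))) : X ≤ bulletStar star V X :=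
  le_inf (le_trans le_sup_right (hΩ.le_star (V ⊔ X) le_top)) hX

theorem star_sup_bullet (hΩ : IsStratification ⊤ F Ω star) {X : Subgroup S}
    (hX : X ≤ (Subgroup.normalizer ((V : Subgroup S) : Set S))) :
    star (V ⊔ bulletStar star V X) = star (V ⊔ X) := by
  apply le_antisymm
  · have h1 : V ⊔ bulletStar star V X ≤ star (V ⊔ X) := by
      apply sup_le
      · exact le_trans le_sup_left (hΩ.le_star (V ⊔ X) le_top)
      · exact inf_le_left
    have h2 := hΩ.star_mono _ _ le_top le_top h1
    rwa [hΩ.star_fix _ (hΩ.star_mem (V ⊔ X) le_top)] at h2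
  · exact hΩ.star_mono _ _ le_top le_top (sup_le_sup_left (le_bullet hΩ hX) V)

theorem bullet_idem (hΩ : IsStratification ⊤ F Ω star) {X : Subgroup S}
    (hX : X ≤ (Subgroup.normalizer ((V : Subgroup S) : Set S))) :
    bulletStar star V (bulletStar star V X) = bulletStar star V X := by
  show star (V ⊔ bulletStar star V X) ⊓ (Subgroup.normalizer ((V : Subgroup S) : Set S)) = bulletStar star V X
  rw [star_sup_bullet hΩ hX]
  rfl

theorem bullet_eq (hΩ : IsStratification ⊤ F Ω star) {A : Subgroup S}
    (hA : A ∈ bulletOmega star V) : A = star (V ⊔ A) ⊓ (Subgroup.normalizer ((V : Subgroup S) : Set S)) := by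
  obtain ⟨X, hX, rfl⟩ := hA
  exact (bullet_idem hΩ hX).symm

theorem bullet_mem_norm {A : Subgroup S} (hA : A ∈ bulletOmega star V) :
    A ≤ (Subgroup.normalizer ((V : Subgroup S) : Set S)) := by
  obtain ⟨X, hX, rfl⟩ := hA
  exact inf_le_right

/-- transport of bullets along an `N_F(V)`-isomorphism -/
theorem bullet_image (hF : IsFusionSystem ⊤ F) (hΩ : IsStratification ⊤ F Ω star)
    {f : S → S} {X Y : Subgroup S} (hNf : NFus F V f X Y)
    (himg : f '' (X : Set S) = (Y : Set S)) :
    ∃ G, IsFIso F G (star (V ⊔ X)) (star (V ⊔ Y)) ∧ Set.EqOn G f (X : Set S) ∧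
      G '' (V : Set S) = (V : Set S) ∧
      G '' ((bulletStar star V X : Subgroup S) : Set S) =
        ((bulletStar star V Y : Subgroup S) : Set S) := by
  have h0 := NFus_sub_E0 hF hNf
  have hYim : imSub f X = Y := imSub_eq_of_iso hF ⟨h0.1, himg⟩
  obtain ⟨g, hgiso, hgeq, hgV⟩ := NFus_ext hF hNf
  rw [hYim] at hgiso
  obtain ⟨G, hGiso, hGeq⟩ := hΩ.extend_star g (V ⊔ X) (V ⊔ Y) hgiso
  have hXsub : (X : Set S) ⊆ ((V ⊔ X : Subgroup S) : Set S) :=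
    SetLike.coe_subset_coe.mpr le_sup_right
  have hVsub : (V : Set S) ⊆ ((V ⊔ X : Subgroup S) : Set S) :=
    SetLike.coe_subset_coe.mpr le_sup_left
  have hGf : Set.EqOn G f (X : Set S) := fun x hx => by
    rw [hGeq (hXsub hx), hgeq hx]
  have hGV : G '' (V : Set S) = (V : Set S) := by
    rw [Set.image_congr (fun v hv => hGeq (hVsub hv))]
    exact hgV
  have hVXstar : V ⊔ X ≤ star (V ⊔ X) := hΩ.le_star (V ⊔ X) le_top
  have hVYstar : V ⊔ Y ≤ star (V ⊔ Y) := hΩ.le_star (V ⊔ Y) le_top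
  have hV_starX : V ≤ star (V ⊔ X) := le_trans le_sup_left hVXstar
  have hV_starY : V ≤ star (V ⊔ Y) := le_trans le_sup_left hVYstar
  obtain ⟨Hi, hHiso, hHG, hGH⟩ := iso_inv hF hGiso
  have hHV : Hi '' (V : Set S) = (V : Set S) :=
    inv_image_eq hHG (SetLike.coe_subset_coe.mpr hV_starX) hGV
  have hmapsG : ∀ z ∈ star (V ⊔ X) ⊓ (Subgroup.normalizer ((V : Subgroup S) : Set S)), G z ∈ star (V ⊔ Y) ⊓ (Subgroup.normalizer ((V : Subgroup S) : Set S)) := by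
    intro z hz
    obtain ⟨hz1, hz2⟩ := Subgroup.mem_inf.mp hz
    refine Subgroup.mem_inf.mpr ⟨?_, ?_⟩
    · exact hF.mapsTo G _ _ hGiso.1 hz1
    · exact mapsTo_normalizer hF hGiso.1 hV_starX hGV hz1 hz2
  have hmapsH : ∀ z ∈ star (V ⊔ Y) ⊓ (Subgroup.normalizer ((V : Subgroup S) : Set S)), Hi z ∈ star (V ⊔ X) ⊓ (Subgroup.normalizer ((V : Subgroup S) : Set S)) := by
    intro z hz
    obtain ⟨hz1, hz2⟩ := Subgroup.mem_inf.mp hz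
    refine Subgroup.mem_inf.mpr ⟨?_, ?_⟩
    · exact hF.mapsTo Hi _ _ hHiso.1 hz1
    · exact mapsTo_normalizer hF hHiso.1 hV_starY hHV hz1 hz2
  refine ⟨G, hGiso, hGf, hGV, ?_⟩
  apply Set.Subset.antisymm
  · rintro _ ⟨z, hz, rfl⟩
    exact hmapsG z hz
  · intro w hw
    refine ⟨Hi w, hmapsH w hw, ?_⟩
    exact hGH w (SetLike.mem_coe.mp ((Subgroup.mem_inf.mp hw).1))

theorem NFus_strat (hF : IsFusionSystem ⊤ F) (hΩ : IsStratification ⊤ F Ω star)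
    (V : Subgroup S) :
    IsStratification (Subgroup.normalizer ((V : Subgroup S) : Set S)) (NFus F V) (bulletOmega star V) (bulletStar star V) := by
  constructor
  · intro A hA
    exact bullet_mem_norm hA
  · intro X hX
    exact ⟨X, hX, rfl⟩
  · intro A hA
    obtain ⟨X, hX, rfl⟩ := hA
    exact bullet_idem hΩ hX
  · intro X Y hX hY hXY
    exact inf_le_inf (hΩ.star_mono _ _ le_top le_top (sup_le_sup_left hXY V)) le_rfl
  · obtain ⟨Nb, hNb⟩ := hΩ.finDim
    refine ⟨Nb, fun n hn => ?_⟩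
    obtain ⟨c, hsm, hmem⟩ := hn
    refine hNb n ⟨fun i => star (V ⊔ c i), ?_, fun i => hΩ.star_mem _ le_top⟩
    intro i j hij
    have hle : star (V ⊔ c i) ≤ star (V ⊔ c j) :=
      hΩ.star_mono _ _ le_top le_top (sup_le_sup_left (hsm hij).le V)
    rcases eq_or_lt_of_le hle with heq | h
    · exfalso
      have hci : c i = star (V ⊔ c i) ⊓ (Subgroup.normalizer ((V : Subgroup S) : Set S)) := bullet_eq hΩ (hmem i)
      have hcj : c j = star (V ⊔ c j) ⊓ (Subgroup.normalizer ((V : Subgroup S) : Set S)) := bullet_eq hΩ (hmem j)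
      have : c i = c j := by rw [hci, hcj, heq]
      exact (hsm hij).ne this
    · exact h
  · intro A hA f B hiso
    have h0 := NFus_sub_E0 hF hiso.1
    have hAeq : A = star (V ⊔ A) ⊓ (Subgroup.normalizer ((V : Subgroup S) : Set S)) := bullet_eq hΩ hA
    obtain ⟨G, hGiso, hGf, hGV, hGbullet⟩ := bullet_image hF hΩ hiso.1 hiso.2
    have hBbullet : (bulletStar star V B : Set S) = (B : Set S) := by
      have h1 : G '' ((bulletStar star V A : Subgroup S) : Set S) = G '' (A : Set S) := by
        congr 1
        rw [show bulletStar star V A = star (V ⊔ A) ⊓ (Subgroup.normalizer ((V : Subgroup S) : Set S)) from rfl, ← hAeq]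
      rw [← hGbullet, h1, Set.image_congr (fun a ha => hGf ha), hiso.2]
    exact ⟨B, h0.2.2.1, (SetLike.coe_injective hBbullet).symm⟩
  · intro X hX
    exact le_bullet hΩ hX
  · intro f X Y hiso
    have h0 := NFus_sub_E0 hF hiso.1
    obtain ⟨G, hGiso, hGf, hGV, hGbullet⟩ := bullet_image hF hΩ hiso.1 hiso.2
    refine ⟨G, ⟨?_, hGbullet⟩, fun x hx => hGf hx⟩
    apply NFus_of_iso hF inf_le_right inf_le_right (V_le_bullet hΩ X) ?_ hGV
    exact isFIso_of_image hF hGiso.1 inf_le_left inf_le_left hGbullet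

end Bullet

end StratProof

namespace StratProof

open Set Subgroup

variable {S : Type*} [Group S]

section StrongClosure

variable {F : HomPred S} {T : Subgroup S}

theorem T_normal (hF : IsFusionSystem ⊤ F) (hT : StronglyClosedF F T) :
    ∀ g t : S, t ∈ T → g⁻¹ * t * g ∈ T := by
  intro g t ht
  have hc : F (fun x => g⁻¹ * x * g) T ⊤ :=
    hF.conj_mem g (Subgroup.mem_top g) T ⊤ le_top le_top (fun x _ => Subgroup.mem_top _)
  have hiso := isoOnto hF hc
  have hle : imSub (fun x => g⁻¹ * x * g) T ≤ T :=
    hT T le_rfl _ ⟨_, hiso⟩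
  apply hle
  exact Subgroup.subset_closure ⟨t, ht, rfl⟩

theorem normalizer_le_inf (hF : IsFusionSystem ⊤ F) (hT : StronglyClosedF F T)
    (X : Subgroup S) : (Subgroup.normalizer ((X : Subgroup S) : Set S)) ≤ (Subgroup.normalizer ((X ⊓ T : Subgroup S) : Set S)) := by
  intro n hn
  rw [Subgroup.mem_normalizer_iff]
  intro b
  constructor
  · intro hb
    obtain ⟨hb1, hb2⟩ := Subgroup.mem_inf.mp hb
    refine Subgroup.mem_inf.mpr ⟨(Subgroup.mem_normalizer_iff.mp hn b).mp hb1, ?_⟩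
    have := T_normal hF hT n⁻¹ b hb2
    simpa using this
  · intro hb
    obtain ⟨hb1, hb2⟩ := Subgroup.mem_inf.mp hb
    refine Subgroup.mem_inf.mpr ⟨(Subgroup.mem_normalizer_iff.mp hn b).mpr hb1, ?_⟩
    have := T_normal hF hT n (n * b * n⁻¹) hb2
    simpa [mul_assoc] using this

theorem image_inter_T (hF : IsFusionSystem ⊤ F) (hT : StronglyClosedF F T)
    {f : S → S} {A B : Subgroup S} (hiso : IsFIso F f A B) :
    f '' ((A ⊓ T : Subgroup S) : Set S) = ((B ⊓ T : Subgroup S) : Set S) := by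
  have riso := iso_restrict hF hiso.1 (inf_le_left : A ⊓ T ≤ A)
  have h1 : imSub f (A ⊓ T) ≤ T := hT (A ⊓ T) inf_le_right _ ⟨f, riso⟩
  obtain ⟨g, hg, hgf, hfg⟩ := iso_inv hF hiso
  have riso' := iso_restrict hF hg.1 (inf_le_left : B ⊓ T ≤ B)
  have h2 : imSub g (B ⊓ T) ≤ T := hT (B ⊓ T) inf_le_right _ ⟨g, riso'⟩
  apply Set.Subset.antisymm
  · rintro _ ⟨x, hx, rfl⟩
    obtain ⟨hx1, hx2⟩ := Subgroup.mem_inf.mp hx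
    refine Subgroup.mem_inf.mpr ⟨?_, ?_⟩
    · rw [← SetLike.mem_coe, ← hiso.2]
      exact Set.mem_image_of_mem f hx1
    · apply h1
      apply Subgroup.subset_closure
      exact ⟨x, hx, rfl⟩
  · intro y hy
    obtain ⟨hy1, hy2⟩ := Subgroup.mem_inf.mp hy
    have hgy : g y ∈ A ⊓ T := by
      refine Subgroup.mem_inf.mpr ⟨?_, ?_⟩
      · rw [← SetLike.mem_coe, ← hg.2]
        exact Set.mem_image_of_mem g hy1
      · apply h2
        apply Subgroup.subset_closure
        exact ⟨y, hy, rfl⟩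
    exact ⟨g y, hgy, hfg y hy1⟩

end StrongClosure

end StratProof

/-- Lemma 2.10. Let `T` be strongly closed in `F`, `Q ≤ S`, and
`V = Q ⊓ T`.  If `V ∈ Γ`, `V` is fully normalized in `F`, and `Q` is fully normalized
in `N_F(V)` (with respect to the stratification `(N_Ω(V), •)`), then `Q` is fully
normalized in `F`. -/
theorem fullyNormalized_of_fullyNormalized_in_normalizer
    {S : Type*} [Group S] (F : HomPred S)
    (Ω : Set (Subgroup S)) (star : Subgroup S → Subgroup S)
    (hF : IsFusionSystem ⊤ F) (hΩ : IsStratification ⊤ F Ω star)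
    (Γ : Set (Subgroup S)) (hΓ : FClosed F Γ) (hind : GammaInductive ⊤ F Γ)
    (T Q : Subgroup S) (hT : StronglyClosedF F T)
    (hVΓ : Q ⊓ T ∈ Γ)
    (hVfn : FullyNormalizedIn ⊤ F Ω star (Q ⊓ T))
    (hQfn : FullyNormalizedIn (Subgroup.normalizer ((Q ⊓ T : Subgroup S) : Set S)) (NFus F (Q ⊓ T))
      (bulletOmega star (Q ⊓ T)) (bulletStar star (Q ⊓ T)) Q) :
    FullyNormalizedIn ⊤ F Ω star Q := by
  open StratProof in
  open Set Subgroup in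
  -- abbreviations
  have hnorm_le : ∀ X : Subgroup S, (Subgroup.normalizer ((X : Subgroup S) : Set S)) ≤ (Subgroup.normalizer ((X ⊓ T : Subgroup S) : Set S)) :=
    normalizer_le_inf hF hT
  have hQN : Q ≤ (Subgroup.normalizer ((Q ⊓ T : Subgroup S) : Set S)) := le_trans Subgroup.le_normalizer (hnorm_le Q)
  have hNI_V : NormalizerInductive ⊤ F (Q ⊓ T) :=
    normInd_of_fullyNorm hF hΩ (Q ⊓ T) hVfn (hind (Q ⊓ T) hVΓ)
  have hFS_N := NFus_fs hF (Q ⊓ T)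
  have hST_N := NFus_strat hF hΩ (Q ⊓ T)
  -- construction of Y0, a normalizer-inductive conjugate of Q in N_F(V)
  have hQΓ : Q ∈ Γ := hΓ.2.2 (Q ⊓ T) hVΓ Q inf_le_left
  obtain ⟨Qt, hQtc, hQtni⟩ := hind Q hQΓ
  obtain ⟨φt, hφt⟩ := id hQtc
  have hVt_img : φt '' ((Q ⊓ T : Subgroup S) : Set S) = ((Qt ⊓ T : Subgroup S) : Set S) :=
    image_inter_T hF hT hφt
  have hVtiso : IsFIso F φt (Q ⊓ T) (Qt ⊓ T) := by
    have h1 := iso_restrict hF hφt.1 (inf_le_left : Q ⊓ T ≤ Q)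
    have heq : imSub φt (Q ⊓ T) = Qt ⊓ T :=
      SetLike.coe_injective (by rw [imSub_coe hF h1.1, hVt_img])
    rwa [heq] at h1
  obtain ⟨αt, hαt, hαtV⟩ := hNI_V (Qt ⊓ T) ⟨φt, hVtiso⟩
  have hQt_dom : Qt ≤ (Subgroup.normalizer ((Qt ⊓ T : Subgroup S) : Set S)) ⊓ ⊤ :=
    le_inf (le_trans Subgroup.le_normalizer (hnorm_le Qt)) le_top
  have hisoY0 := iso_restrict hF hαt hQt_dom
  set Y0 := imSub αt Qt with hY0def
  have hαtQt : F αt Qt ((Subgroup.normalizer ((Q ⊓ T : Subgroup S) : Set S)) ⊓ ⊤ : Subgroup S) :=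
    hF.restrict_mem αt _ _ Qt _ hαt hQt_dom le_rfl
      ((hF.mapsTo _ _ _ hαt).mono_left hQt_dom)
  have hY0N : Y0 ≤ (Subgroup.normalizer ((Q ⊓ T : Subgroup S) : Set S)) :=
    le_trans (imSub_le hF hαtQt) inf_le_left
  have hY0coe : (Y0 : Set S) = αt '' (Qt : Set S) := imSub_coe hF hisoY0.1
  have hVY0 : Q ⊓ T ≤ Y0 := by
    intro v hv
    have hv' : (v : S) ∈ αt '' ((Qt ⊓ T : Subgroup S) : Set S) := hαtV.symm ▸ hv
    obtain ⟨w, hw, rfl⟩ := hv'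
    rw [← SetLike.mem_coe, hY0coe]
    exact Set.mem_image_of_mem αt (Set.mem_of_mem_of_subset hw
      (SetLike.coe_subset_coe.mpr inf_le_left))
  have hisoQY0 : IsFIso F (αt ∘ φt) Q Y0 := iso_comp hF hφt hisoY0
  have hg0V : (αt ∘ φt) '' ((Q ⊓ T : Subgroup S) : Set S) = ((Q ⊓ T : Subgroup S) : Set S) := by
    rw [Set.image_comp, hVt_img, hαtV]
  have hY0conj : Y0 ∈ FConj (NFus F (Q ⊓ T)) Q :=
    ⟨αt ∘ φt, NFus_of_iso hF hQN hY0N inf_le_left hisoQY0 hg0V, hisoQY0.2⟩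
  -- Y0 is normalizer-inductive in N_F(V)
  have hY0ni : NormalizerInductive (Subgroup.normalizer ((Q ⊓ T : Subgroup S) : Set S)) (NFus F (Q ⊓ T)) Y0 := by
    intro P' hP'
    obtain ⟨h, hh⟩ := hP'
    have h0 := NFus_sub_E0 hF hh.1
    have hisoh : IsFIso F h Y0 P' := ⟨h0.1, hh.2⟩
    obtain ⟨gh, hghiso, hgheq, hghV⟩ := NFus_ext hF hh.1
    have hVY0' : ((Q ⊓ T : Subgroup S) : Set S) ⊆ (Y0 : Set S) :=
      SetLike.coe_subset_coe.mpr hVY0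
    have hhV : h '' ((Q ⊓ T : Subgroup S) : Set S) = ((Q ⊓ T : Subgroup S) : Set S) := by
      rw [Set.image_congr (fun v hv => (hgheq (hVY0' hv)).symm)]
      exact hghV
    have hVP' : Q ⊓ T ≤ P' := by
      intro v hv
      rw [← SetLike.mem_coe, ← hh.2]
      have hv' : (v : S) ∈ h '' ((Q ⊓ T : Subgroup S) : Set S) := hhV.symm ▸ hv
      obtain ⟨w, hw, rfl⟩ := hv'
      exact Set.mem_image_of_mem h (hVY0' hw)
    have hP'Qt : P' ∈ FConj F Qt := ⟨h ∘ αt, iso_comp hF hisoY0 hisoh⟩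
    obtain ⟨lam, hlam, hlamP'⟩ := hQtni P' hP'Qt
    have hisoQP' : IsFIso F (h ∘ (αt ∘ φt)) Q P' := iso_comp hF hisoQY0 hisoh
    have hP'T : P' ⊓ T = Q ⊓ T := by
      have h1 := image_inter_T hF hT hisoQP'
      have h2 : (h ∘ (αt ∘ φt)) '' ((Q ⊓ T : Subgroup S) : Set S) =
          ((Q ⊓ T : Subgroup S) : Set S) := by
        rw [Set.image_comp, hg0V, hhV]
      exact SetLike.coe_injective (h1.symm.trans h2)
    have hlamiso : IsFIso F lam P' Qt :=
      isFIso_of_image hF hlam (le_inf Subgroup.le_normalizer le_top)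
        (le_inf Subgroup.le_normalizer le_top) hlamP'
    have hlamV : lam '' ((Q ⊓ T : Subgroup S) : Set S) = ((Qt ⊓ T : Subgroup S) : Set S) := by
      have h1 := image_inter_T hF hT hlamiso
      rwa [hP'T] at h1
    have hD'le : (Subgroup.normalizer ((P' : Subgroup S) : Set S)) ⊓ (Subgroup.normalizer ((Q ⊓ T : Subgroup S) : Set S)) ≤ (Subgroup.normalizer ((P' : Subgroup S) : Set S)) ⊓ ⊤ :=
      le_inf inf_le_left le_top
    have hlamD' : F lam ((Subgroup.normalizer ((P' : Subgroup S) : Set S)) ⊓ (Subgroup.normalizer ((Q ⊓ T : Subgroup S) : Set S))) ((Subgroup.normalizer ((Qt : Subgroup S) : Set S)) ⊓ ⊤ : Subgroup S) :=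
      hF.restrict_mem lam _ _ _ _ hlam hD'le le_rfl
        ((hF.mapsTo _ _ _ hlam).mono_left hD'le)
    have hQtn_le : (Subgroup.normalizer ((Qt : Subgroup S) : Set S)) ⊓ ⊤ ≤ (Subgroup.normalizer ((Qt ⊓ T : Subgroup S) : Set S)) ⊓ ⊤ :=
      inf_le_inf (hnorm_le Qt) le_rfl
    have hαt' : F αt ((Subgroup.normalizer ((Qt : Subgroup S) : Set S)) ⊓ ⊤ : Subgroup S) ((Subgroup.normalizer ((Q ⊓ T : Subgroup S) : Set S)) ⊓ ⊤ : Subgroup S) :=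
      hF.restrict_mem αt _ _ _ _ hαt hQtn_le le_rfl
        ((hF.mapsTo _ _ _ hαt).mono_left hQtn_le)
    have hβ' : F (αt ∘ lam) ((Subgroup.normalizer ((P' : Subgroup S) : Set S)) ⊓ (Subgroup.normalizer ((Q ⊓ T : Subgroup S) : Set S)))
        ((Subgroup.normalizer ((Q ⊓ T : Subgroup S) : Set S)) ⊓ ⊤ : Subgroup S) :=
      hF.comp_mem lam αt _ _ _ hlamD' hαt'
    have hP'D' : P' ≤ (Subgroup.normalizer ((P' : Subgroup S) : Set S)) ⊓ (Subgroup.normalizer ((Q ⊓ T : Subgroup S) : Set S)) :=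
      le_inf Subgroup.le_normalizer h0.2.2.1
    have hVD' : Q ⊓ T ≤ (Subgroup.normalizer ((P' : Subgroup S) : Set S)) ⊓ (Subgroup.normalizer ((Q ⊓ T : Subgroup S) : Set S)) := le_trans hVP' hP'D'
    have hβ'P' : (αt ∘ lam) '' (P' : Set S) = (Y0 : Set S) := by
      rw [Set.image_comp, hlamP', hY0coe]
    have hβ'V : (αt ∘ lam) '' ((Q ⊓ T : Subgroup S) : Set S) =
        ((Q ⊓ T : Subgroup S) : Set S) := by
      rw [Set.image_comp, hlamV, hαtV]
    have hmaps : Set.MapsTo (αt ∘ lam)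
        (((Subgroup.normalizer ((P' : Subgroup S) : Set S)) ⊓ (Subgroup.normalizer ((Q ⊓ T : Subgroup S) : Set S)) : Subgroup S) : Set S)
        (((Subgroup.normalizer ((Y0 : Subgroup S) : Set S)) ⊓ (Subgroup.normalizer ((Q ⊓ T : Subgroup S) : Set S)) : Subgroup S) : Set S) := by
      intro x hx
      have hx1 : x ∈ (Subgroup.normalizer ((P' : Subgroup S) : Set S)) := (Subgroup.mem_inf.mp hx).1
      have hx2 : x ∈ (Subgroup.normalizer ((Q ⊓ T : Subgroup S) : Set S)) := (Subgroup.mem_inf.mp hx).2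
      refine Subgroup.mem_inf.mpr ⟨?_, ?_⟩
      · exact mapsTo_normalizer hF hβ' hP'D' hβ'P' hx hx1
      · exact mapsTo_normalizer hF hβ' hVD' hβ'V hx hx2
    have hisoB := isoOnto hF hβ'
    have hB1le : imSub (αt ∘ lam) ((Subgroup.normalizer ((P' : Subgroup S) : Set S)) ⊓ (Subgroup.normalizer ((Q ⊓ T : Subgroup S) : Set S))) ≤
        (Subgroup.normalizer ((Y0 : Subgroup S) : Set S)) ⊓ (Subgroup.normalizer ((Q ⊓ T : Subgroup S) : Set S)) :=
      (Subgroup.closure_le _).mpr hmaps.image_subset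
    have hNB1 : NFus F (Q ⊓ T) (αt ∘ lam) ((Subgroup.normalizer ((P' : Subgroup S) : Set S)) ⊓ (Subgroup.normalizer ((Q ⊓ T : Subgroup S) : Set S)))
        (imSub (αt ∘ lam) ((Subgroup.normalizer ((P' : Subgroup S) : Set S)) ⊓ (Subgroup.normalizer ((Q ⊓ T : Subgroup S) : Set S)))) :=
      NFus_of_iso hF inf_le_right (le_trans hB1le inf_le_right) hVD' hisoB hβ'V
    exact ⟨αt ∘ lam, NFus_enlarge hNB1 hB1le inf_le_right, hβ'P'⟩
  have hNI_Q : NormalizerInductive (Subgroup.normalizer ((Q ⊓ T : Subgroup S) : Set S)) (NFus F (Q ⊓ T)) Q :=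
    normInd_of_fullyNorm hFS_N hST_N Q hQfn ⟨Y0, hY0conj, hY0ni⟩
  -- now the conclusion
  intro U hU
  obtain ⟨φ, hφ⟩ := hU
  have hWimg : φ '' ((Q ⊓ T : Subgroup S) : Set S) = ((U ⊓ T : Subgroup S) : Set S) :=
    image_inter_T hF hT hφ
  have hWiso : IsFIso F φ (Q ⊓ T) (U ⊓ T) := by
    have h1 := iso_restrict hF hφ.1 (inf_le_left : Q ⊓ T ≤ Q)
    have heq : imSub φ (Q ⊓ T) = U ⊓ T :=
      SetLike.coe_injective (by rw [imSub_coe hF h1.1, hWimg])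
    rwa [heq] at h1
  obtain ⟨α, hα, hαW⟩ := hNI_V (U ⊓ T) ⟨φ, hWiso⟩
  have hU_dom : U ≤ (Subgroup.normalizer ((U ⊓ T : Subgroup S) : Set S)) ⊓ ⊤ :=
    le_inf (le_trans Subgroup.le_normalizer (hnorm_le U)) le_top
  have hisoP := iso_restrict hF hα hU_dom
  set P := imSub α U with hPdef
  have hPcoe : (P : Set S) = α '' (U : Set S) := imSub_coe hF hisoP.1
  have hPT : P ⊓ T = Q ⊓ T := by
    have h1 := image_inter_T hF hT hisoP
    exact SetLike.coe_injective (h1.symm.trans hαW)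
  have hPN : P ≤ (Subgroup.normalizer ((Q ⊓ T : Subgroup S) : Set S)) := by
    calc P ≤ (Subgroup.normalizer ((P : Subgroup S) : Set S)) := Subgroup.le_normalizer
    _ ≤ (Subgroup.normalizer ((P ⊓ T : Subgroup S) : Set S)) := hnorm_le P
    _ = (Subgroup.normalizer ((Q ⊓ T : Subgroup S) : Set S)) := by rw [hPT]
  have hVP : Q ⊓ T ≤ P := by
    intro v hv
    have hv' : (v : S) ∈ α '' ((U ⊓ T : Subgroup S) : Set S) := hαW.symm ▸ hv
    obtain ⟨w, hw, rfl⟩ := hv'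
    rw [← SetLike.mem_coe, hPcoe]
    exact Set.mem_image_of_mem α (Set.mem_of_mem_of_subset hw
      (SetLike.coe_subset_coe.mpr inf_le_left))
  have hisoQP : IsFIso F (α ∘ φ) Q P := iso_comp hF hφ hisoP
  have hQPV : (α ∘ φ) '' ((Q ⊓ T : Subgroup S) : Set S) = ((Q ⊓ T : Subgroup S) : Set S) := by
    rw [Set.image_comp, hWimg, hαW]
  have hPconj : P ∈ FConj (NFus F (Q ⊓ T)) Q :=
    ⟨α ∘ φ, NFus_of_iso hF hQN hPN inf_le_left hisoQP hQPV, hisoQP.2⟩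
  obtain ⟨β, hβ, hβP⟩ := hNI_Q P hPconj
  have hβ0 := NFus_sub_E0 hF hβ
  have hRUle : (Subgroup.normalizer ((U : Subgroup S) : Set S)) ⊓ ⊤ ≤ (Subgroup.normalizer ((U ⊓ T : Subgroup S) : Set S)) ⊓ ⊤ :=
    inf_le_inf (hnorm_le U) le_rfl
  have hUimg : α '' (U : Set S) = (P : Set S) := hPcoe.symm
  have hmapsα : Set.MapsTo α (((Subgroup.normalizer ((U : Subgroup S) : Set S)) ⊓ ⊤ : Subgroup S) : Set S)
      (((Subgroup.normalizer ((P : Subgroup S) : Set S)) ⊓ (Subgroup.normalizer ((Q ⊓ T : Subgroup S) : Set S)) : Subgroup S) : Set S) := by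
    intro x hx
    have hx' : x ∈ ((Subgroup.normalizer ((U ⊓ T : Subgroup S) : Set S)) ⊓ ⊤ : Subgroup S) := hRUle hx
    refine Subgroup.mem_inf.mpr ⟨?_, ?_⟩
    · exact mapsTo_normalizer hF hα hU_dom hUimg hx' (Subgroup.mem_inf.mp hx).1
    · have h1 : α x ∈ ((Subgroup.normalizer ((Q ⊓ T : Subgroup S) : Set S)) ⊓ ⊤ : Subgroup S) := hF.mapsTo _ _ _ hα hx'
      exact (Subgroup.mem_inf.mp h1).1
  have hαR : F α ((Subgroup.normalizer ((U : Subgroup S) : Set S)) ⊓ ⊤ : Subgroup S) ((Subgroup.normalizer ((P : Subgroup S) : Set S)) ⊓ (Subgroup.normalizer ((Q ⊓ T : Subgroup S) : Set S))) :=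
    hF.restrict_mem α _ _ _ _ hα hRUle (le_inf inf_le_right le_top) hmapsα
  have hiso1 := isoOnto hF hαR
  have hA1le : imSub α ((Subgroup.normalizer ((U : Subgroup S) : Set S)) ⊓ ⊤ : Subgroup S) ≤ (Subgroup.normalizer ((P : Subgroup S) : Set S)) ⊓ (Subgroup.normalizer ((Q ⊓ T : Subgroup S) : Set S)) :=
    imSub_le hF hαR
  have hβA1 : F β (imSub α ((Subgroup.normalizer ((U : Subgroup S) : Set S)) ⊓ ⊤ : Subgroup S)) ((Subgroup.normalizer ((Q : Subgroup S) : Set S)) ⊓ (Subgroup.normalizer ((Q ⊓ T : Subgroup S) : Set S))) :=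
    hF.restrict_mem β _ _ _ _ hβ0.1 hA1le le_rfl
      ((hF.mapsTo _ _ _ hβ0.1).mono_left hA1le)
  have hiso2 := isoOnto hF hβA1
  have hiso12 : IsFIso F (β ∘ α) ((Subgroup.normalizer ((U : Subgroup S) : Set S)) ⊓ ⊤ : Subgroup S)
      (imSub β (imSub α ((Subgroup.normalizer ((U : Subgroup S) : Set S)) ⊓ ⊤ : Subgroup S))) := iso_comp hF hiso1 hiso2
  have hA2le : imSub β (imSub α ((Subgroup.normalizer ((U : Subgroup S) : Set S)) ⊓ ⊤ : Subgroup S)) ≤ (Subgroup.normalizer ((Q : Subgroup S) : Set S)) ⊓ ⊤ :=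
    le_trans (imSub_le hF hβA1) (inf_le_inf le_rfl le_top)
  have e1 : dimEnd Ω (star ((Subgroup.normalizer ((U : Subgroup S) : Set S)) ⊓ ⊤)) =
      dimEnd Ω (star (imSub β (imSub α ((Subgroup.normalizer ((U : Subgroup S) : Set S)) ⊓ ⊤ : Subgroup S)))) :=
    dim_star_eq_of_iso hF hΩ hiso12
  have e2 : dimEnd Ω (star (imSub β (imSub α ((Subgroup.normalizer ((U : Subgroup S) : Set S)) ⊓ ⊤ : Subgroup S)))) ≤
      dimEnd Ω (star ((Subgroup.normalizer ((Q : Subgroup S) : Set S)) ⊓ ⊤)) :=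
    dimEnd_le_dimEnd hΩ (hΩ.star_mono _ _ le_top le_top hA2le)
      (hΩ.star_mem _ le_top) (hΩ.star_mem _ le_top)
  exact le_trans (le_of_eq e1) e2
end
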